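/- arXiv:2008.01862 — 8 statements merged into one kernel-verified Lean document; each statement's English description precedes it below -/
import Mathlib

section
/- Let L ⊂ ℝⁿ be a full-rank lattice with basis matrix A whose rows are a₁,…,aₙ. Suppose I ⊂ {1,…,n} is a subset of n−k distinct indices (1 ≤ k < n) such that d_I(A) := Σ_{i∈I} d(aᵢ) < n. Then there exist ℓ := n − d_I(A) linearly independent vectors x₁,…,x_ℓ ∈ L each having at most k nonzero coordinates; in particular s_ℓ(L) ≤ k. -/
/-- The rational dimension of a vector. -/
noncomputable def ratDim {n : ℕ} (x : Fin n → ℝ) : ℕ :=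
  Module.finrank ℚ (Submodule.span ℚ (Set.range x))

/-- The lattice `A ℤⁿ`, i.e. the ℤ-span of the columns of `A`. -/
def lat {n : ℕ} (A : Matrix (Fin n) (Fin n) ℝ) : Submodule ℤ (Fin n → ℝ) :=
  Submodule.span ℤ (Set.range A.transpose)

/-- ℚ-linearly independent families of rational vectors are ℝ-linearly independent
after coercion. -/
lemma cast_linIndep {n l : ℕ} (w : Fin l → Fin n → ℚ)
    (hw : LinearIndependent ℚ w) :
    LinearIndependent ℝ (fun j (m : Fin n) => ((w j m : ℚ) : ℝ)) := by
  classical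
  obtain ⟨W', hcompl⟩ := Submodule.exists_isCompl (Submodule.span ℚ (Set.range w))
  have hfr : Module.finrank ℚ (Submodule.span ℚ (Set.range w)) = l := by
    simpa using finrank_span_eq_card hw
  have hsum : l + Module.finrank ℚ W' = n := by
    have := Submodule.finrank_add_eq_of_isCompl hcompl
    rw [hfr] at this
    simpa [Module.finrank_pi] using this
  set m := Module.finrank ℚ W'
  let b := Module.finBasis ℚ W'
  let u : Fin l ⊕ Fin m → Fin n → ℚ := Sum.elim w (fun j => (b j : Fin n → ℚ))
  have hb : LinearIndependent ℚ (fun j => (b j : Fin n → ℚ)) :=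
    b.linearIndependent.map' W'.subtype W'.ker_subtype
  have hu : LinearIndependent ℚ u := by
    refine hw.sum_type hb ?_
    refine hcompl.disjoint.mono_right ?_
    rw [Submodule.span_le]
    rintro _ ⟨j, rfl⟩
    exact (b j).2
  let e : (Fin l ⊕ Fin m) ≃ Fin n := finSumFinEquiv.trans (finCongr hsum)
  let B : Matrix (Fin n) (Fin n) ℚ := fun p => u (e.symm p)
  have hB : IsUnit B := by
    rw [← Matrix.linearIndependent_rows_iff_isUnit]
    exact hu.comp e.symm e.symm.injective
  have hdet : B.det ≠ 0 := by
    intro h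
    rw [Matrix.isUnit_iff_isUnit_det, h] at hB
    simp at hB
  let BR : Matrix (Fin n) (Fin n) ℝ := B.map (fun q => (q : ℝ))
  have hBRdet : BR.det ≠ 0 := by
    have : BR.det = ((B.det : ℚ) : ℝ) := ((Rat.castHom ℝ).map_det B).symm
    rw [this]
    exact_mod_cast hdet
  have hBR : LinearIndependent ℝ (fun p => BR p) := by
    exact Matrix.linearIndependent_rows_iff_isUnit.mpr
      (by rw [Matrix.isUnit_iff_isUnit_det]; exact hBRdet.isUnit)
  have key : LinearIndependent ℝ ((fun p => BR p) ∘ (fun j => e (Sum.inl j))) :=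
    hBR.comp _ (e.injective.comp Sum.inl_injective)
  convert key using 2 with j
  funext i
  show ((w j i : ℚ) : ℝ) = ((B (e (Sum.inl j)) i : ℚ) : ℝ)
  simp [B, u]

theorem stmt1 {n k : ℕ} (hk1 : 1 ≤ k) (hkn : k < n)
    (A : Matrix (Fin n) (Fin n) ℝ) (hA : IsUnit A.det)
    (I : Finset (Fin n)) (hI : I.card = n - k)
    (hdI : ∑ i ∈ I, ratDim (A i) < n) :
    ∃ x : Fin (n - ∑ i ∈ I, ratDim (A i)) → Fin n → ℝ,
      LinearIndependent ℝ x ∧ (∀ j, x j ∈ lat A) ∧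
        ∀ j, (Finset.univ.filter fun i => x j i ≠ 0).card ≤ k := by
  classical
  let f : Fin n → ((Fin n → ℚ) →ₗ[ℚ] ℝ) := fun i =>
    { toFun := fun v => ∑ m, (v m : ℝ) * A i m
      map_add' := by intro v w; simp [add_mul, Finset.sum_add_distrib]
      map_smul' := by
        intro c v
        simp [Finset.mul_sum, Rat.smul_def, mul_assoc] }
  have hker : ∀ i, n ≤ Module.finrank ℚ (LinearMap.ker (f i)) + ratDim (A i) := by
    intro i
    haveI : FiniteDimensional ℚ (Submodule.span ℚ (Set.range (A i))) :=
      FiniteDimensional.span_of_finite ℚ (Set.finite_range _)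
    have hmem : ∀ v, f i v ∈ Submodule.span ℚ (Set.range (A i)) := by
      intro v
      show (∑ m, (v m : ℝ) * A i m) ∈ Submodule.span ℚ (Set.range (A i))
      refine Submodule.sum_mem _ fun m _ => ?_
      show (v m : ℝ) * A i m ∈ _
      rw [← Rat.smul_def]
      exact Submodule.smul_mem _ _ (Submodule.subset_span ⟨m, rfl⟩)
    let g : (Fin n → ℚ) →ₗ[ℚ] (Submodule.span ℚ (Set.range (A i))) :=
      (f i).codRestrict _ hmem
    have h1 := LinearMap.finrank_range_add_finrank_ker g
    rw [LinearMap.ker_codRestrict] at h1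
    have h2 : Module.finrank ℚ (LinearMap.range g) ≤ ratDim (A i) :=
      Submodule.finrank_le _
    have h3 : Module.finrank ℚ (Fin n → ℚ) = n := by simp [Module.finrank_pi]
    omega
  have key : ∀ S : Finset (Fin n),
      n ≤ Module.finrank ℚ (⨅ i ∈ S, LinearMap.ker (f i) : Submodule ℚ (Fin n → ℚ))
        + ∑ i ∈ S, ratDim (A i) := by
    intro S
    induction S using Finset.induction_on with
    | empty =>
        rw [show (⨅ i ∈ (∅:Finset (Fin n)), LinearMap.ker (f i) : Submodule ℚ (Fin n → ℚ)) = ⊤ by simp]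
        simp [Module.finrank_pi, finrank_top]
    | @insert a s ha ih =>
        rw [Finset.sum_insert ha]
        have hins : (⨅ i ∈ insert a s, LinearMap.ker (f i) : Submodule ℚ (Fin n → ℚ))
            = LinearMap.ker (f a) ⊓ ⨅ i ∈ s, LinearMap.ker (f i) := by
          rw [Finset.iInf_insert]
        rw [hins]
        have h4 := Submodule.finrank_sup_add_finrank_inf_eq (LinearMap.ker (f a))
          (⨅ i ∈ s, LinearMap.ker (f i) : Submodule ℚ (Fin n → ℚ))
        have h5 : Module.finrank ℚ
            ((LinearMap.ker (f a)) ⊔ (⨅ i ∈ s, LinearMap.ker (f i)) : Submodule ℚ (Fin n → ℚ)) ≤ n := by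
          have := Submodule.finrank_le
            ((LinearMap.ker (f a)) ⊔ (⨅ i ∈ s, LinearMap.ker (f i)) : Submodule ℚ (Fin n → ℚ))
          simpa [Module.finrank_pi] using this
        have h6 := hker a
        omega
  set K : Submodule ℚ (Fin n → ℚ) := ⨅ i ∈ I, LinearMap.ker (f i) with hK
  set l : ℕ := n - ∑ i ∈ I, ratDim (A i) with hl
  have hlK : l ≤ Module.finrank ℚ K := by
    have h := key I
    rw [← hK] at h
    omega
  let b := Module.finBasis ℚ K
  -- the Fin (finrank K) basis; take the first l vectors
  let u : Fin l → Fin n → ℚ := fun j => (b (Fin.castLE (by simpa using hlK) j) : Fin n → ℚ)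
  have huK : ∀ j, u j ∈ K := fun j => (b _).2
  have hu : LinearIndependent ℚ u := by
    have h := (b.linearIndependent.map' K.subtype K.ker_subtype)
    exact h.comp _ (Fin.castLE_injective _)
  -- clear denominators
  let N : Fin l → ℕ := fun j => ∏ m, (u j m).den
  have hNpos : ∀ j, 0 < N j := fun j => Finset.prod_pos fun m _ => (u j m).pos
  have hz : ∀ j m, ∃ z : ℤ, (z : ℚ) = (N j : ℚ) * u j m := by
    intro j m
    have hdvd : (u j m).den ∣ N j := Finset.dvd_prod_of_mem _ (Finset.mem_univ m)
    obtain ⟨c, hc⟩ := hdvd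
    refine ⟨(c : ℤ) * (u j m).num, ?_⟩
    have hden : ((u j m).den : ℚ) ≠ 0 := by
      exact_mod_cast (u j m).pos.ne'
    have h0 := Rat.num_div_den (u j m)
    rw [div_eq_iff hden] at h0
    rw [hc]
    push_cast
    linear_combination (c : ℚ) * h0
  choose z hzv using hz
  -- scaled rational vectors
  let w : Fin l → ℚˣ := fun j => Units.mk0 (N j : ℚ) (by exact_mod_cast (hNpos j).ne')
  let v : Fin l → Fin n → ℚ := fun j => (N j : ℚ) • u j
  have hvK : ∀ j, v j ∈ K := fun j => K.smul_mem _ (huK j)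
  have hv : LinearIndependent ℚ v := by
    have h := hu.units_smul w
    convert h using 1
    ext j m
    simp [v, w, Units.smul_def]
  have hvz : ∀ j m, ((z j m : ℚ)) = v j m := by
    intro j m
    rw [hzv j m]
    rfl
  -- real vectors
  have hcv : LinearIndependent ℝ (fun j (m : Fin n) => ((v j m : ℚ) : ℝ)) :=
    cast_linIndep v hv
  haveI := A.invertibleOfIsUnitDet hA
  have hinj : Function.Injective A.mulVec := A.mulVec_injective_of_invertible
  refine ⟨fun j => A.mulVec (fun m => ((v j m : ℚ) : ℝ)), ?_, ?_, ?_⟩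
  · have : LinearIndependent ℝ
        (A.mulVecLin ∘ (fun j (m : Fin n) => ((v j m : ℚ) : ℝ))) := by
      refine hcv.map' A.mulVecLin ?_
      rw [LinearMap.ker_eq_bot]
      exact hinj
    exact this
  · intro j
    show A.mulVec (fun m => ((v j m : ℚ) : ℝ)) ∈ lat A
    have hx : A.mulVec (fun m => ((v j m : ℚ) : ℝ)) = ∑ m, z j m • A.transpose m := by
      funext i
      rw [Matrix.mulVec, Finset.sum_apply]
      simp only [dotProduct]
      refine Finset.sum_congr rfl fun m _ => ?_
      rw [← hvz j m]
      push_cast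
      simp [Matrix.transpose_apply, mul_comm, zsmul_eq_mul]
    rw [hx]
    exact Submodule.sum_mem _ fun m _ =>
      Submodule.smul_mem _ _ (Submodule.subset_span ⟨m, rfl⟩)
  · intro j
    show (Finset.univ.filter fun i => A.mulVec (fun m => ((v j m : ℚ) : ℝ)) i ≠ 0).card ≤ k
    have hzero : ∀ i ∈ I, A.mulVec (fun m => ((v j m : ℚ) : ℝ)) i = 0 := by
      intro i hi
      have hvker : v j ∈ LinearMap.ker (f i) := by
        have := hvK j
        rw [hK] at this
        simp only [Submodule.mem_iInf] at this
        exact this i hi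
      have : f i (v j) = 0 := hvker
      have hfv : f i (v j) = ∑ m, ((v j m : ℚ) : ℝ) * A i m := rfl
      rw [Matrix.mulVec]
      simp only [dotProduct]
      rw [hfv] at this
      rw [← this]
      exact Finset.sum_congr rfl fun m _ => mul_comm _ _
    have hsub : (Finset.univ.filter fun i => A.mulVec (fun m => ((v j m : ℚ) : ℝ)) i ≠ 0)
        ⊆ Iᶜ := by
      intro i hi
      simp only [Finset.mem_filter] at hi
      simp only [Finset.mem_compl]
      intro hiI
      exact hi.2 (hzero i hiI)
    calc (Finset.univ.filter fun i => A.mulVec (fun m => ((v j m : ℚ) : ℝ)) i ≠ 0).card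
        ≤ Iᶜ.card := Finset.card_le_card hsub
      _ = n - I.card := by simp [Finset.card_compl]
      _ ≤ k := by omega
end

section
/- Let L ⊂ ℝⁿ be a full-rank lattice. Then the following are equivalent: (1) d(L) = n, i.e. every row of some (equivalently any) basis matrix of L has rational dimension 1; (2) L contains n linearly independent vectors each of which is a nonzero scalar multiple of a standard basis vector (equivalently s₁(L) = ⋯ = sₙ(L) = 1). -/
lemma ratDim_eq_one_iff {n : ℕ} (x : Fin n → ℝ) :
    ratDim x = 1 ↔ x ≠ 0 ∧ ∃ (c : ℝ) (q : Fin n → ℚ), c ≠ 0 ∧ ∀ i, x i = c * q i := by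
  unfold ratDim
  rw [finrank_eq_one_iff']
  constructor
  · rintro ⟨v, hv0, hall⟩
    have hvne : (v : ℝ) ≠ 0 := fun h => hv0 (Subtype.ext h)
    have hq : ∀ i, ∃ r : ℚ, x i = r * v := by
      intro i
      obtain ⟨r, hr⟩ := hall ⟨x i, Submodule.subset_span ⟨i, rfl⟩⟩
      exact ⟨r, by simpa [Rat.smul_def, eq_comm] using congrArg Subtype.val hr⟩
    choose q hqq using hq
    refine ⟨?_, v, q, hvne, fun i => by rw [hqq i, mul_comm]⟩
    · rintro rfl
      have : (v : ℝ) ∈ (⊥ : Submodule ℚ ℝ) := by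
        have h2 : Submodule.span ℚ (Set.range (0 : Fin n → ℝ)) ≤ ⊥ := by
          rw [Submodule.span_le]
          rintro y ⟨i, rfl⟩
          simp
        exact h2 v.2
      exact hvne (by simpa using this)
  · rintro ⟨hx0, c, q, hc, hxe⟩
    obtain ⟨i₀, hi₀⟩ := Function.ne_iff.1 hx0
    have hq0 : (q i₀ : ℝ) ≠ 0 := by
      intro h; apply hi₀; simp [hxe i₀, h]
    have hle : Submodule.span ℚ (Set.range x) ≤ Submodule.span ℚ {c} := by
      rw [Submodule.span_le]
      rintro y ⟨i, rfl⟩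
      exact Submodule.mem_span_singleton.2 ⟨q i, by rw [hxe i, Rat.smul_def, mul_comm]⟩
    refine ⟨⟨x i₀, Submodule.subset_span ⟨i₀, rfl⟩⟩,
      fun h => hi₀ (by simpa using congrArg Subtype.val h), ?_⟩
    rintro ⟨w, hw⟩
    obtain ⟨r, hr⟩ := Submodule.mem_span_singleton.1 (hle hw)
    refine ⟨r / q i₀, Subtype.ext ?_⟩
    have hq0' : (q i₀ : ℚ) ≠ 0 := by
      exact_mod_cast fun h => hq0 (by exact_mod_cast congrArg (Rat.cast : ℚ → ℝ) h)
    show ((r / q i₀ : ℚ) : ℝ) * x i₀ = w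
    rw [hxe i₀, ← hr, Rat.smul_def]
    push_cast
    field_simp

lemma exists_common_den {n : ℕ} (q : Fin n → ℚ) :
    ∃ N : ℕ, 0 < N ∧ ∀ j, ∃ z : ℤ, (z : ℚ) = (N : ℚ) * q j := by
  refine ⟨∏ j, (q j).den, Finset.prod_pos fun j _ => (q j).pos, fun j => ?_⟩
  obtain ⟨t, ht⟩ := Finset.dvd_prod_of_mem (fun j => (q j).den) (Finset.mem_univ j)
  refine ⟨t * (q j).num, ?_⟩
  rw [ht]
  push_cast
  rw [mul_comm ((q j).den : ℚ) (t:ℚ), mul_assoc, Rat.den_mul_eq_num]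

theorem stmt4 {n : ℕ} (A : Matrix (Fin n) (Fin n) ℝ) (hA : IsUnit A.det) :
    (∀ i, ratDim (A i) = 1) ↔
      ∃ x : Fin n → Fin n → ℝ, LinearIndependent ℝ x ∧
        ∀ i, x i ∈ lat A ∧
          ∃ (c : ℝ) (j : Fin n), c ≠ 0 ∧ x i = c • (Pi.single j 1 : Fin n → ℝ) := by
  constructor
  · intro h
    have h' := fun i => ((ratDim_eq_one_iff (A i)).1 (h i)).2
    choose c q hc hrow using h'
    set Q : Matrix (Fin n) (Fin n) ℚ := Matrix.of (fun i j => q i j) with hQdef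
    have hAQ : ∀ i j, A i j = c i * (Q i j : ℝ) := fun i j => hrow i j
    have hAfact : A = Matrix.diagonal c * Q.map ((↑) : ℚ → ℝ) := by
      ext i j
      rw [Matrix.diagonal_mul, Matrix.map_apply]
      exact hAQ i j
    have hmapdet : (Q.map ((↑) : ℚ → ℝ)).det = ((Q.det : ℚ) : ℝ) := by
      rw [show Q.map ((↑) : ℚ → ℝ) = (Rat.castHom ℝ).mapMatrix Q from rfl,
        ← RingHom.map_det]; rfl
    have hdetA : A.det ≠ 0 := hA.ne_zero
    have hQdet : Q.det ≠ 0 := by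
      intro h0
      apply hdetA
      rw [hAfact, Matrix.det_mul, hmapdet, h0]
      simp
    have hQB : Q * Q.adjugate = Q.det • 1 := Matrix.mul_adjugate Q
    have hcom : ∀ k, ∃ (m : Fin n → ℤ) (s : ℚ), s ≠ 0 ∧
        ∀ i, (∑ j, (m j : ℚ) * Q i j) = s * (if i = k then 1 else 0) := by
      intro k
      obtain ⟨N, hNpos, hNz⟩ := exists_common_den (fun j => Q.adjugate j k)
      choose z hz using hNz
      refine ⟨z, N * Q.det, mul_ne_zero (by exact_mod_cast hNpos.ne') hQdet, fun i => ?_⟩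
      calc (∑ j, (z j : ℚ) * Q i j) = (N : ℚ) * ∑ j, Q i j * Q.adjugate j k := by
            rw [Finset.mul_sum]; congr 1; ext j; rw [hz j]; ring
        _ = (N : ℚ) * (Q * Q.adjugate) i k := by rw [Matrix.mul_apply]
        _ = (N : ℚ) * Q.det * (if i = k then 1 else 0) := by
            rw [hQB]; simp [Matrix.smul_apply, Matrix.one_apply]
        _ = _ := rfl
    choose m s hs key using hcom
    set x : Fin n → Fin n → ℝ :=
      fun k => (c k * ((s k : ℚ) : ℝ)) • (Pi.single k 1 : Fin n → ℝ) with hxdef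
    have hmem : ∀ k, ∑ j, m k j • A.transpose j = x k := by
      intro k
      funext i
      have hsum : (∑ j, m k j • A.transpose j) i = ∑ j, (m k j : ℝ) * A i j := by
        simp [Finset.sum_apply, Matrix.transpose_apply, zsmul_eq_mul]
      rw [hsum]
      have hterm : ∀ j, (m k j : ℝ) * A i j = c i * (((m k j : ℚ) * Q i j : ℚ) : ℝ) := by
        intro j; rw [hAQ i j]; push_cast; ring
      rw [Finset.sum_congr rfl (fun j _ => hterm j), ← Finset.mul_sum, ← Rat.cast_sum, key k i]
      simp only [hxdef, Pi.smul_apply, Pi.single_apply, smul_eq_mul]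
      push_cast
      split_ifs with hik
      · subst hik; ring
      · ring
    have hx0 : ∀ k, c k * ((s k : ℚ) : ℝ) ≠ 0 := fun k =>
      mul_ne_zero (hc k) (by exact_mod_cast hs k)
    refine ⟨x, ?_, fun k => ⟨?_, c k * ((s k : ℚ) : ℝ), k, hx0 k, rfl⟩⟩
    · rw [Fintype.linearIndependent_iff]
      intro g hg k
      have hgk := congrFun hg k
      simp only [hxdef, Finset.sum_apply, Pi.smul_apply, Pi.single_apply, smul_eq_mul,
        mul_ite, mul_one, mul_zero, Finset.sum_ite_eq, Finset.mem_univ, if_true,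
        Pi.zero_apply] at hgk
      exact (mul_eq_zero.1 hgk).resolve_right (hx0 k)
    · rw [show x k = ∑ j, m k j • A.transpose j from (hmem k).symm]
      exact Submodule.sum_mem _ fun j _ =>
        Submodule.smul_mem _ _ (Submodule.subset_span ⟨j, rfl⟩)
  · rintro ⟨x, hind, hprop⟩
    have hmem := fun i => (hprop i).1
    choose cc jj hcc hxe using fun i => (hprop i).2
    have hxval : ∀ l i, x l i = cc l * (if i = jj l then 1 else 0) := by
      intro l i
      rw [hxe l]
      simp [Pi.single_apply]
    have hjinj : Function.Injective jj := by
      intro i i' hjj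
      by_contra hne
      have hsum : ∑ k, (if k = i then cc i' else if k = i' then -cc i else 0) • x k = 0 := by
        have hsplit : ∀ k ∈ Finset.univ,
            (if k = i then cc i' else if k = i' then -cc i else 0) • x k
            = (if k = i then cc i' • x i else 0) + (if k = i' then (-cc i) • x i' else 0) := by
          intro k _
          rcases eq_or_ne k i with rfl | h1
          · simp [Ne.symm hne, if_neg hne]
          · rcases eq_or_ne k i' with rfl | h2
            · simp [h1]
            · simp [h1, h2]
        rw [Finset.sum_congr rfl hsplit, Finset.sum_add_distrib, Finset.sum_ite_eq',
          Finset.sum_ite_eq']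
        simp only [Finset.mem_univ, if_true]
        rw [hxe i, hxe i', hjj]
        module
      have := Fintype.linearIndependent_iff.1 hind _ hsum i
      simp at this
      exact hcc i' this
    have hjbij : Function.Bijective jj := Finite.injective_iff_bijective.1 hjinj
    let σ : Equiv.Perm (Fin n) := Equiv.ofBijective jj hjbij
    have hσ : ∀ l, jj l = σ l := fun l => rfl
    have hmem' : ∀ i, ∃ m : Fin n → ℤ, ∑ l, m l • A.transpose l = x i := by
      intro i
      exact (Submodule.mem_span_range_iff_exists_fun (R := ℤ)).1 (hmem i)
    choose M hM using hmem'
    set Mz : Matrix (Fin n) (Fin n) ℤ := Matrix.of M with hMzdef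
    set Mr : Matrix (Fin n) (Fin n) ℝ := Mz.map ((↑) : ℤ → ℝ) with hMrdef
    set X : Matrix (Fin n) (Fin n) ℝ := Matrix.of x with hXdef
    have hMX : Mr * A.transpose = X := by
      ext i k
      rw [Matrix.mul_apply]
      have := congrFun (hM i) k
      simpa [Finset.sum_apply, zsmul_eq_mul, hMrdef, hXdef, hMzdef] using this
    have hXunit : IsUnit X.det := by
      rw [← Matrix.isUnit_iff_isUnit_det]
      exact Matrix.linearIndependent_rows_iff_isUnit.1 hind
    have hXdet0 : X.det ≠ 0 := hXunit.ne_zero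
    have hMrdet0 : Mr.det ≠ 0 := by
      intro h0
      apply hXdet0
      rw [← hMX, Matrix.det_mul, h0, zero_mul]
    have hMrdetcast : Mr.det = ((Mz.det : ℤ) : ℝ) := by
      rw [show Mr = (Int.castRingHom ℝ).mapMatrix Mz from rfl, ← RingHom.map_det]; rfl
    have hadj : Mr.det • A.transpose = Mr.adjugate * X := by
      rw [← hMX, ← Matrix.mul_assoc, Matrix.adjugate_mul, Matrix.smul_mul, Matrix.one_mul]
    have hadjcast : Mr.adjugate = (Mz.adjugate).map ((↑) : ℤ → ℝ) := by
      rw [show Mr = (Int.castRingHom ℝ).mapMatrix Mz from rfl, ← RingHom.map_adjugate]; rfl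
    intro i
    set l₀ := σ.symm i with hl₀
    have hjl₀ : jj l₀ = i := σ.apply_symm_apply i
    have hentry : ∀ k, Mr.det * A i k = (Mz.adjugate k l₀ : ℝ) * cc l₀ := by
      intro k
      have h1 := congrFun (congrFun hadj k) i
      rw [Matrix.smul_apply, Matrix.transpose_apply, smul_eq_mul] at h1
      rw [h1, Matrix.mul_apply]
      have h2 : ∀ l, Mr.adjugate k l * X l i
          = (if l = l₀ then (Mz.adjugate k l₀ : ℝ) * cc l₀ else 0) := by
        intro l
        have : X l i = x l i := rfl
        rw [this, hxval l i]
        rcases eq_or_ne l l₀ with rfl | hl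
        · rw [if_pos rfl, if_pos hjl₀.symm, hadjcast]
          simp only [Matrix.map_apply]
          ring
        · have hne : i ≠ jj l := fun h => hl (hjinj (hjl₀.trans h)).symm
          rw [if_neg hne, if_neg hl]
          ring
      rw [Finset.sum_congr rfl fun l _ => h2 l, Finset.sum_ite_eq', if_pos (Finset.mem_univ l₀)]
    rw [ratDim_eq_one_iff]
    have hAind : LinearIndependent ℝ (fun i => A i) :=
      Matrix.linearIndependent_rows_iff_isUnit.2 ((Matrix.isUnit_iff_isUnit_det A).2 hA)
    refine ⟨hAind.ne_zero i, cc l₀ / Mr.det, fun k => (Mz.adjugate k l₀ : ℚ), ?_, fun k => ?_⟩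
    · exact div_ne_zero (hcc l₀) hMrdet0
    · have := hentry k
      have hA' : A i k = (Mz.adjugate k l₀ : ℝ) * cc l₀ / Mr.det := by
        field_simp at this ⊢
        linarith [this]
      rw [hA']
      push_cast
      ring
end

section
/- Let A ∈ GL_n(ℝ) have each row aᵢ of the form aᵢ = αᵢ fᵢ with αᵢ ∈ ℝ \ {0} and fᵢ ∈ ℤⁿ primitive, and let L = A·ℤⁿ. Then L contains a rectangular full-rank sublattice M spanned by n nonzero scalar multiples of the standard basis vectors, with index [L : M] = (det(L) / ∏ᵢ|αᵢ|)^{n−1}. Explicitly, M = B·ℤⁿ where B = det(F)·𝒜, F is the integer matrix with rows fᵢ, and 𝒜 = diag(α₁,…,αₙ). -/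
/-- The index of a sublattice `M` inside `L`. -/
noncomputable def idx {n : ℕ} (M L : Submodule ℤ (Fin n → ℝ)) : ℕ :=
  AddSubgroup.relIndex M.toAddSubgroup L.toAddSubgroup

open Matrix

lemma colspan_index {n : ℕ} (M : Matrix (Fin n) (Fin n) ℤ) (hM : M.det ≠ 0) :
    (Submodule.span ℤ (Set.range Mᵀ)).toAddSubgroup.index = M.det.natAbs := by
  classical
  have hli : LinearIndependent ℤ Mᵀ := by
    apply Fintype.linearIndependent_iff.mpr
    intro c hc i
    have h0 : M.mulVec c = 0 := by
      ext j
      have := congrFun hc j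
      simpa [Matrix.mulVec, dotProduct, Finset.sum_apply, mul_comm] using this
    have h1 : M.det • c = 0 := by
      have h2 := congrArg (M.adjugate.mulVec) h0
      rwa [Matrix.mulVec_mulVec, Matrix.adjugate_mul, Matrix.smul_mulVec,
        Matrix.one_mulVec, Matrix.mulVec_zero] at h2
    have := congrFun h1 i
    simp only [Pi.smul_apply, smul_eq_mul, Pi.zero_apply, mul_eq_zero] at this
    tauto
  set N : Submodule ℤ (Fin n → ℤ) := Submodule.span ℤ (Set.range Mᵀ) with hN
  let bC : Module.Basis (Fin n) ℤ N := Module.Basis.span hli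
  obtain ⟨m, snf⟩ := N.smithNormalForm (Pi.basisFun ℤ (Fin n))
  have hmn : m = n := by
    have e := snf.bN.indexEquiv bC
    simpa using Fintype.card_congr e
  subst hmn
  have hbij : Function.Bijective snf.f := by
    rw [← Finite.injective_iff_bijective]
    exact snf.f.injective
  let σ : Fin m ≃ Fin m := Equiv.ofBijective snf.f hbij
  have hidx : N.toAddSubgroup.index = ∏ i, (snf.a i).natAbs := by
    rw [snf.toAddSubgroup_index_eq_pow_mul_prod]
    simp [Ideal.span_singleton_toAddSubgroup_eq_zmultiples, Int.index_zmultiples]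
  rw [hidx]
  -- now show ∏ |a i| = |det M|
  let e1 : (Fin m → ℤ) ≃ₗ[ℤ] N := snf.bM.equiv snf.bN σ.symm
  let e2 : (Fin m → ℤ) ≃ₗ[ℤ] N := (Pi.basisFun ℤ (Fin m)).equiv bC (Equiv.refl _)
  have hassoc : Associated (LinearMap.det ((N.subtype : N →ₗ[ℤ] _) ∘ₗ (e1 : (Fin m → ℤ) →ₗ[ℤ] N)))
      (LinearMap.det ((N.subtype : N →ₗ[ℤ] _) ∘ₗ (e2 : (Fin m → ℤ) →ₗ[ℤ] N))) :=
    LinearMap.associated_det_comp_equiv _ _ _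
  have h1 : LinearMap.det ((N.subtype : N →ₗ[ℤ] _) ∘ₗ (e1 : (Fin m → ℤ) →ₗ[ℤ] N))
      = ∏ i, snf.a (σ.symm i) := by
    rw [← LinearMap.det_toMatrix snf.bM]
    have : LinearMap.toMatrix snf.bM snf.bM
        ((N.subtype : N →ₗ[ℤ] _) ∘ₗ (e1 : (Fin m → ℤ) →ₗ[ℤ] N))
        = Matrix.diagonal (fun i => snf.a (σ.symm i)) := by
      ext j i
      rw [LinearMap.toMatrix_apply]
      have : ((N.subtype : N →ₗ[ℤ] _) ∘ₗ (e1 : (Fin m → ℤ) →ₗ[ℤ] N)) (snf.bM i)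
          = snf.a (σ.symm i) • snf.bM i := by
        simp only [LinearMap.comp_apply, Submodule.subtype_apply]
        show ((e1 (snf.bM i) : N) : Fin m → ℤ) = _
        rw [show e1 (snf.bM i) = snf.bN (σ.symm i) from snf.bM.equiv_apply i snf.bN σ.symm]
        rw [snf.snf (σ.symm i)]
        congr 1
        exact congrArg snf.bM (σ.apply_symm_apply i)
      rw [this, _root_.map_smul, Module.Basis.repr_self]
      by_cases h : j = i
      · subst h; simp
      · simp [Matrix.diagonal_apply_ne _ h, Finsupp.single_apply, Ne.symm h, h]
    rw [this, Matrix.det_diagonal]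
  have h2 : LinearMap.det ((N.subtype : N →ₗ[ℤ] _) ∘ₗ (e2 : (Fin m → ℤ) →ₗ[ℤ] N)) = M.det := by
    rw [← LinearMap.det_toMatrix (Pi.basisFun ℤ (Fin m))]
    congr 1
    ext j i
    rw [LinearMap.toMatrix_apply]
    simp only [LinearMap.comp_apply, Submodule.subtype_apply, Pi.basisFun_repr]
    show ((e2 ((Pi.basisFun ℤ (Fin m)) i) : N) : Fin m → ℤ) j = M j i
    rw [show e2 ((Pi.basisFun ℤ (Fin m)) i) = bC i from
      (Pi.basisFun ℤ (Fin m)).equiv_apply i bC (Equiv.refl _)]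
    rw [show (bC i : Fin m → ℤ) = Mᵀ i from congrArg Subtype.val (Module.Basis.span_apply hli i)]
    rfl
  have := (Int.associated_iff_natAbs.mp hassoc)
  rw [h1, h2] at this
  rw [← this]
  rw [← Equiv.prod_comp σ.symm (fun i => (snf.a i).natAbs)]
  exact (map_prod Int.natAbsHom _ _).symm

lemma relindex_map {n : ℕ} (ψ : (Fin n → ℤ) →ₗ[ℤ] (Fin n → ℝ)) (hψ : Function.Injective ψ)
    (N' : Submodule ℤ (Fin n → ℤ)) :
    AddSubgroup.relIndex (Submodule.map ψ N').toAddSubgroup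
      (LinearMap.range ψ).toAddSubgroup = N'.toAddSubgroup.index := by
  set H := (Submodule.map ψ N').toAddSubgroup with hH
  set K := (LinearMap.range ψ).toAddSubgroup with hK
  let e' : (Fin n → ℤ) →+ K :=
    { toFun := fun x => ⟨ψ x, LinearMap.mem_range_self ψ x⟩
      map_zero' := by ext; simp
      map_add' := by intro a b; ext; simp }
  have hsurj : Function.Surjective e' := by
    rintro ⟨y, hy⟩
    obtain ⟨x, rfl⟩ := hy
    exact ⟨x, rfl⟩
  have : AddSubgroup.relIndex H K = (H.addSubgroupOf K).index := rfl
  rw [this, ← AddSubgroup.index_comap_of_surjective (H.addSubgroupOf K) hsurj]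
  congr 1
  ext x
  simp only [AddSubgroup.mem_comap, AddSubgroup.mem_addSubgroupOf]
  have hex : ((e' x : K) : Fin n → ℝ) = ψ x := rfl
  constructor
  · intro hx
    have : ψ x ∈ Submodule.map ψ N' := hx
    obtain ⟨y, hy, hyx⟩ := this
    rwa [← hψ hyx]
  · intro hx
    show ((e' x : K) : Fin n → ℝ) ∈ (Submodule.map ψ N')
    rw [hex]
    exact ⟨x, hx, rfl⟩

noncomputable def castLin (n : ℕ) : (Fin n → ℤ) →ₗ[ℤ] (Fin n → ℝ) where
  toFun x := fun i => (x i : ℝ)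
  map_add' a b := by ext i; simp
  map_smul' m x := by ext i; simp

noncomputable def phi {n : ℕ} (A : Matrix (Fin n) (Fin n) ℝ) :
    (Fin n → ℤ) →ₗ[ℤ] (Fin n → ℝ) :=
  (A.mulVecLin.restrictScalars ℤ) ∘ₗ castLin n

lemma phi_apply {n : ℕ} (A : Matrix (Fin n) (Fin n) ℝ) (x : Fin n → ℤ) :
    phi A x = A.mulVec (fun i => (x i : ℝ)) := rfl

lemma lat_eq_range_phi {n : ℕ} (A : Matrix (Fin n) (Fin n) ℝ) :
    lat A = LinearMap.range (phi A) := by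
  apply le_antisymm
  · rw [lat, Submodule.span_le]
    rintro _ ⟨j, rfl⟩
    refine ⟨Pi.single j 1, ?_⟩
    rw [phi_apply]
    have : (fun i => ((Pi.single j 1 : Fin n → ℤ) i : ℝ)) = Pi.single j (1 : ℝ) := by
      ext i
      by_cases h : i = j
      · subst h; simp
      · simp [Pi.single_apply, h]
    rw [this]
    ext i
    simp [Matrix.mulVec_single, Matrix.transpose_apply]
  · rintro _ ⟨x, rfl⟩
    rw [phi_apply]
    have : A.mulVec (fun i => (x i : ℝ)) = ∑ j, x j • Aᵀ j := by
      ext i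
      simp [Matrix.mulVec, dotProduct, Finset.sum_apply, mul_comm]
    rw [this]
    exact Submodule.sum_mem _ fun j _ =>
      Submodule.smul_mem _ _ (Submodule.subset_span ⟨j, rfl⟩)

theorem stmt6 {n : ℕ} (α : Fin n → ℝ) (hα : ∀ i, α i ≠ 0)
    (F : Matrix (Fin n) (Fin n) ℤ) (hF : ∀ i, Finset.univ.gcd (F i) = 1)
    (A : Matrix (Fin n) (Fin n) ℝ) (hAdef : ∀ i j, A i j = α i * (F i j : ℝ))
    (hA : IsUnit A.det) :
    lat (Matrix.diagonal fun i => (F.det : ℝ) * α i) ≤ lat A ∧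
      (idx (lat (Matrix.diagonal fun i => (F.det : ℝ) * α i)) (lat A) : ℝ) =
        (|A.det| / ∏ i, |α i|) ^ (n - 1) := by
  classical
  set c : ℤ →+* ℝ := Int.castRingHom ℝ with hc
  have hAeq : A = (Matrix.diagonal α) * (F.map ⇑c) := by
    ext i j
    rw [Matrix.diagonal_mul]
    exact hAdef i j
  have hdetA : A.det = (∏ i, α i) * (F.det : ℝ) := by
    rw [hAeq, Matrix.det_mul, Matrix.det_diagonal, ← RingHom.mapMatrix_apply,
      ← RingHom.map_det]
    rfl
  have hdF : F.det ≠ 0 := by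
    intro h
    apply hA.ne_zero
    rw [hdetA, h]
    simp
  have hB : Matrix.diagonal (fun i => (F.det : ℝ) * α i)
      = A * (F.adjugate.map ⇑c) := by
    rw [hAeq, Matrix.mul_assoc, ← Matrix.map_mul, Matrix.mul_adjugate]
    have h1 : ((F.det • (1 : Matrix (Fin n) (Fin n) ℤ)).map ⇑c)
        = Matrix.diagonal (fun _ => (F.det : ℝ)) := by
      ext i j
      by_cases h : i = j
      · subst h; simp [Matrix.map_apply, Matrix.smul_apply, Matrix.one_apply, smul_eq_mul, ← Matrix.diagonal_intCast, Matrix.diagonal_apply]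
      · simp [Matrix.map_apply, Matrix.smul_apply, Matrix.one_apply_ne h, ← Matrix.diagonal_intCast, Matrix.diagonal_apply, Ne.symm h,
          Matrix.diagonal_apply_ne _ h]
    rw [h1, Matrix.diagonal_mul_diagonal]
    ext i j
    by_cases h : i = j
    · subst h; simp [mul_comm]
    · simp [Matrix.diagonal_apply_ne _ h]
  have hφB : phi (Matrix.diagonal (fun i => (F.det : ℝ) * α i))
      = (phi A) ∘ₗ (F.adjugate.mulVecLin) := by
    apply LinearMap.ext
    intro x
    rw [LinearMap.comp_apply, phi_apply, phi_apply, hB, ← Matrix.mulVec_mulVec]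
    refine congrArg A.mulVec ?_
    funext i
    exact (RingHom.map_mulVec c F.adjugate x i).symm
  have hlatB : lat (Matrix.diagonal (fun i => (F.det : ℝ) * α i)) = Submodule.map (phi A)
      (Submodule.span ℤ (Set.range F.adjugateᵀ)) := by
    rw [lat_eq_range_phi, hφB, LinearMap.range_comp, Matrix.range_mulVecLin]
    rfl
  have hinj : Function.Injective (phi A) := by
    have : Invertible A := A.invertibleOfIsUnitDet hA
    intro x y h
    rw [phi_apply, phi_apply] at h
    have h2 := A.mulVec_injective_of_invertible h
    funext i
    exact Int.cast_injective (congrFun h2 i)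
  constructor
  · rw [hlatB, lat_eq_range_phi A]
    exact LinearMap.map_le_range
  · have hidx : idx (lat (Matrix.diagonal (fun i => (F.det : ℝ) * α i))) (lat A)
        = (Submodule.span ℤ (Set.range F.adjugateᵀ)).toAddSubgroup.index := by
      rw [idx, hlatB, lat_eq_range_phi A]
      exact relindex_map (phi A) hinj _
    have hadj : F.adjugate.det ≠ 0 := by
      rw [Matrix.det_adjugate]
      exact pow_ne_zero _ hdF
    rw [hidx, colspan_index _ hadj, Matrix.det_adjugate]
    have hprod : ∏ i, |α i| ≠ 0 := Finset.prod_ne_zero_iff.mpr fun i _ => abs_ne_zero.mpr (hα i)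
    rw [hdetA, abs_mul, Finset.abs_prod, mul_comm (∏ i, |α i|) _, mul_div_assoc,
      div_self hprod, mul_one, Fintype.card_fin, Int.natAbs_pow]
    push_cast [Nat.cast_natAbs]
    rfl
end

section
/- For an integer d > 1, let L = A·ℤⁿ where A is the matrix with rows e₁, e₂, …, e_{n−1}, and (1,1,…,1,d). Then any full-rank sublattice M of L that has a basis consisting of vectors each with exactly one nonzero coordinate satisfies [L : M] ≥ d^{n−1}, and the sublattice (dℤ)ⁿ achieves this index. -/
/-- rectangular lattice -/
def rect {n : ℕ} (a : Fin n → ℤ) : Submodule ℤ (Fin n → ℝ) :=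
  Submodule.span ℤ (Set.range fun j => (a j : ℝ) • (Pi.single j 1 : Fin n → ℝ))

lemma mem_span_single_iff {n : ℕ} (a : Fin n → ℝ) (x : Fin n → ℝ) :
    x ∈ Submodule.span ℤ (Set.range fun j => a j • (Pi.single j 1 : Fin n → ℝ)) ↔
    ∃ z : Fin n → ℤ, ∀ i, x i = z i * a i := by
  rw [Submodule.mem_span_range_iff_exists_fun]
  constructor
  · rintro ⟨c, rfl⟩
    refine ⟨c, fun i => ?_⟩
    simp [Finset.sum_apply, Pi.single_apply, mul_comm]
  · rintro ⟨z, hz⟩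
    refine ⟨z, funext fun i => ?_⟩
    simp [Finset.sum_apply, Pi.single_apply, hz i, mul_comm]

lemma mem_rect_iff {n : ℕ} (a : Fin n → ℤ) (x : Fin n → ℝ) :
    x ∈ rect a ↔ ∃ z : Fin n → ℤ, ∀ i, x i = z i * a i := by
  exact mem_span_single_iff (fun j => (a j : ℝ)) x

lemma mem_rect_one_iff {n : ℕ} (x : Fin n → ℝ) :
    x ∈ rect (fun _ => 1) ↔ ∃ z : Fin n → ℤ, ∀ i, x i = z i := by
  rw [mem_rect_iff]; simp

lemma relindex_rect {n : ℕ} (a : Fin n → ℤ) :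
    AddSubgroup.relIndex (rect a).toAddSubgroup
      (rect (fun _ => 1) : Submodule ℤ (Fin n → ℝ)).toAddSubgroup
      = ∏ j, (a j).natAbs := by
  set Z := (rect (fun _ => 1) : Submodule ℤ (Fin n → ℝ)).toAddSubgroup with hZ
  have hmemZ : ∀ x : Fin n → ℝ, x ∈ Z ↔ ∃ z : Fin n → ℤ, ∀ i, x i = z i := fun x =>
    mem_rect_one_iff x
  have hint : ∀ x : Z, ∃ z : Fin n → ℤ, ∀ i, (x : Fin n → ℝ) i = z i := fun x =>
    (hmemZ x).mp x.2
  have hflr : ∀ (x : Z) (z : Fin n → ℤ), (∀ i, (x : Fin n → ℝ) i = z i) →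
      ∀ i, ⌊(x : Fin n → ℝ) i⌋ = z i := by
    intro x z hz i
    rw [hz i]; exact Int.floor_intCast _
  let f : Z →+ ∀ j, ZMod (a j).natAbs := AddMonoidHom.mk'
    (fun x j => ((⌊(x : Fin n → ℝ) j⌋ : ℤ) : ZMod (a j).natAbs))
    (by
      rintro x y
      funext j
      obtain ⟨zx, hzx⟩ := hint x
      obtain ⟨zy, hzy⟩ := hint y
      have e1 := hflr x zx hzx j
      have e2 := hflr y zy hzy j
      have e3 : ⌊((x + y : Z) : Fin n → ℝ) j⌋ = zx j + zy j := by
        show ⌊(x : Fin n → ℝ) j + (y : Fin n → ℝ) j⌋ = _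
        rw [hzx j, hzy j, ← Int.cast_add]; exact Int.floor_intCast _
      show ((⌊((x + y : Z) : Fin n → ℝ) j⌋ : ℤ) : ZMod (a j).natAbs) = _
      simp only [Pi.add_apply]
      rw [e1, e2, e3]; push_cast; ring)
  have hker : f.ker = (rect a).toAddSubgroup.addSubgroupOf Z := by
    ext x
    rw [AddMonoidHom.mem_ker, AddSubgroup.mem_addSubgroupOf, Submodule.mem_toAddSubgroup,
      mem_rect_iff]
    obtain ⟨z, hz⟩ := hint x
    have e := hflr x z hz
    constructor
    · intro h
      have hdvd : ∀ j, a j ∣ z j := by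
        intro j
        have h2 : ((⌊(x : Fin n → ℝ) j⌋ : ℤ) : ZMod (a j).natAbs) = 0 := congrFun h j
        rw [e j, ZMod.intCast_zmod_eq_zero_iff_dvd] at h2
        exact Int.natAbs_dvd.mp h2
      choose c hc using hdvd
      refine ⟨c, fun i => ?_⟩
      rw [hz i, hc i]
      push_cast; ring
    · rintro ⟨w, hw⟩
      funext j
      show ((⌊(x : Fin n → ℝ) j⌋ : ℤ) : ZMod (a j).natAbs) = 0
      have : z j = w j * a j := by
        have := (hz j).symm.trans (hw j)
        exact_mod_cast this
      rw [e j, this, ZMod.intCast_zmod_eq_zero_iff_dvd, Int.natAbs_dvd]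
      exact dvd_mul_left _ _
  have hsurj : Function.Surjective f := by
    intro w
    have h := fun j => ZMod.intCast_surjective (w j)
    choose k hk using h
    refine ⟨⟨fun i => (k i : ℝ), (hmemZ _).mpr ⟨k, fun i => rfl⟩⟩, ?_⟩
    funext j
    show ((⌊((k j : ℤ) : ℝ)⌋ : ℤ) : ZMod (a j).natAbs) = w j
    rw [Int.floor_intCast, hk j]
  rw [AddSubgroup.relIndex, ← hker, AddSubgroup.index_ker]
  rw [AddMonoidHom.range_eq_top.mpr hsurj]
  rw [Nat.card_congr AddSubgroup.topEquiv.toEquiv, Nat.card_pi]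
  simp [Nat.card_zmod]


lemma mem_latA_iff {n : ℕ} (hn : 2 ≤ n) (d : ℕ)
    (A : Matrix (Fin n) (Fin n) ℝ)
    (hAdef : ∀ i j, A i j =
      if (i : ℕ) = n - 1 then (if (j : ℕ) = n - 1 then (d : ℝ) else 1)
      else (if i = j then 1 else 0))
    (x : Fin n → ℝ) :
    x ∈ lat A ↔
      ∃ z : Fin n → ℤ, (∀ i, x i = z i) ∧
        (d : ℤ) ∣ (2 * z ⟨n - 1, by omega⟩ - ∑ j, z j) := by
  show x ∈ Submodule.span ℤ (Set.range A.transpose) ↔ _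
  have hlt : n - 1 < n := by omega
  set L : Fin n := ⟨n - 1, hlt⟩ with hL
  have hvc : ∀ i : Fin n, (i : ℕ) = n - 1 ↔ i = L := by
    intro i; constructor
    · intro h; exact Fin.ext h
    · intro h; rw [h]
  erw [Submodule.mem_span_range_iff_exists_fun]
  have hcoord : ∀ (c : Fin n → ℤ) (i : Fin n),
      (∑ j, c j • A.transpose j) i =
        if i = L then (c L * d + ∑ j ∈ Finset.univ.erase L, (c j : ℝ))
        else (c i : ℝ) := by
    intro c i
    rw [Finset.sum_apply]
    simp only [Matrix.transpose_apply, Pi.smul_apply, zsmul_eq_mul]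
    by_cases hi : i = L
    · subst hi
      rw [if_pos rfl, ← Finset.add_sum_erase _ _ (Finset.mem_univ L)]
      congr 1
      · rw [hAdef]; simp [hL]
      · apply Finset.sum_congr rfl
        intro j hj
        have hjL : j ≠ L := (Finset.mem_erase.mp hj).1
        rw [hAdef]
        have h1 : ((L : Fin n) : ℕ) = n - 1 := rfl
        have h2 : ¬ ((j : ℕ) = n - 1) := fun h => hjL ((hvc j).mp h)
        simp [h1, h2]
    · rw [if_neg hi]
      have h2 : ¬ ((i : ℕ) = n - 1) := fun h => hi ((hvc i).mp h)
      have : ∀ j, (c j : ℝ) * A i j = if j = i then (c j : ℝ) else 0 := by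
        intro j
        rw [hAdef]
        by_cases hji : j = i
        · subst hji; simp [h2]
        · simp [h2, Ne.symm hji, hji]
      rw [Finset.sum_congr rfl fun j _ => this j]
      simp
  constructor
  · rintro ⟨c, rfl⟩
    refine ⟨fun i => if i = L then c L * d + ∑ j ∈ Finset.univ.erase L, c j else c i,
      fun i => ?_, ?_⟩
    · rw [hcoord]
      by_cases hi : i = L <;> simp [hi]
    · simp only [if_pos rfl]
      have herase : ∀ j ∈ Finset.univ.erase L,
          (if j = L then c L * d + ∑ j ∈ Finset.univ.erase L, c j else c j) = c j := by
        intro j hj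
        rw [if_neg (Finset.mem_erase.mp hj).1]
      rw [← Finset.add_sum_erase _ _ (Finset.mem_univ L), if_pos rfl,
        Finset.sum_congr rfl herase]
      refine ⟨c L, by push_cast; ring⟩
  · rintro ⟨z, hz, m, hm⟩
    refine ⟨fun j => if j = L then m else z j, funext fun i => ?_⟩
    rw [hcoord, hz i]
    by_cases hi : i = L
    · subst hi
      rw [if_pos rfl, if_pos rfl]
      have herase : ∀ j ∈ Finset.univ.erase L,
          ((if j = L then m else z j : ℤ) : ℝ) = (z j : ℝ) := by
        intro j hj
        rw [if_neg (Finset.mem_erase.mp hj).1]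
      rw [Finset.sum_congr rfl herase]
      have hsum : ∑ j ∈ Finset.univ.erase L, (z j : ℝ) = (∑ j, z j : ℤ) - z L := by
        push_cast
        rw [← Finset.add_sum_erase _ _ (Finset.mem_univ L)]
        ring
      have h4 : m * (d : ℤ) = z L * 2 - ∑ j, z j := by linarith [hm]
      have h5 : (m : ℝ) * (d : ℝ) = (z L : ℝ) * 2 - ∑ j, (z j : ℝ) := by exact_mod_cast h4
      rw [hsum]
      push_cast
      linarith [h5]
    · rw [if_neg hi, if_neg hi]

lemma relindex_latA {n : ℕ} (hn : 2 ≤ n) (d : ℕ)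
    (A : Matrix (Fin n) (Fin n) ℝ)
    (hAdef : ∀ i j, A i j =
      if (i : ℕ) = n - 1 then (if (j : ℕ) = n - 1 then (d : ℝ) else 1)
      else (if i = j then 1 else 0)) :
    AddSubgroup.relIndex (lat A).toAddSubgroup
      (rect (fun _ => 1) : Submodule ℤ (Fin n → ℝ)).toAddSubgroup = d := by
  show AddSubgroup.relIndex
    (Submodule.span ℤ (Set.range A.transpose)).toAddSubgroup
    (rect (fun _ => 1) : Submodule ℤ (Fin n → ℝ)).toAddSubgroup = d
  have hlt : n - 1 < n := by omega
  set Lidx : Fin n := ⟨n - 1, hlt⟩ with hLidx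
  set Z := (rect (fun _ => 1) : Submodule ℤ (Fin n → ℝ)).toAddSubgroup with hZ
  have hmemZ : ∀ x : Fin n → ℝ, x ∈ Z ↔ ∃ z : Fin n → ℤ, ∀ i, x i = z i := fun x =>
    mem_rect_one_iff x
  have hint : ∀ x : Z, ∃ z : Fin n → ℤ, ∀ i, (x : Fin n → ℝ) i = z i := fun x =>
    (hmemZ x).mp x.2
  have hflr : ∀ (x : Z) (z : Fin n → ℤ), (∀ i, (x : Fin n → ℝ) i = z i) →
      ∀ i, ⌊(x : Fin n → ℝ) i⌋ = z i := by
    intro x z hz i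
    rw [hz i]; exact Int.floor_intCast _
  let f : Z →+ ZMod d := AddMonoidHom.mk'
    (fun x => ((2 * ⌊(x : Fin n → ℝ) Lidx⌋ - ∑ j, ⌊(x : Fin n → ℝ) j⌋ : ℤ) : ZMod d))
    (by
      rintro x y
      obtain ⟨zx, hzx⟩ := hint x
      obtain ⟨zy, hzy⟩ := hint y
      have exy : ∀ i, ⌊((x + y : Z) : Fin n → ℝ) i⌋ = zx i + zy i := by
        intro i
        show ⌊(x : Fin n → ℝ) i + (y : Fin n → ℝ) i⌋ = _
        rw [hzx i, hzy i, ← Int.cast_add]; exact Int.floor_intCast _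
      have key : (2 * (zx Lidx + zy Lidx) - ∑ j, (zx j + zy j) : ℤ)
           = (2 * zx Lidx - ∑ j, zx j) + (2 * zy Lidx - ∑ j, zy j) := by
        rw [Finset.sum_add_distrib]; ring
      show ((2 * ⌊((x + y : Z) : Fin n → ℝ) Lidx⌋
            - ∑ j, ⌊((x + y : Z) : Fin n → ℝ) j⌋ : ℤ) : ZMod d)
         = ((2 * ⌊(x : Fin n → ℝ) Lidx⌋ - ∑ j, ⌊(x : Fin n → ℝ) j⌋ : ℤ) : ZMod d)
         + ((2 * ⌊(y : Fin n → ℝ) Lidx⌋ - ∑ j, ⌊(y : Fin n → ℝ) j⌋ : ℤ) : ZMod d)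
      rw [exy Lidx, Finset.sum_congr rfl fun j _ => exy j, hflr x zx hzx Lidx,
        hflr y zy hzy Lidx, Finset.sum_congr rfl fun j _ => hflr x zx hzx j,
        Finset.sum_congr rfl fun j _ => hflr y zy hzy j, key, Int.cast_add])
  have hker : f.ker =
      (Submodule.span ℤ (Set.range A.transpose)).toAddSubgroup.addSubgroupOf Z := by
    ext x
    rw [AddMonoidHom.mem_ker, AddSubgroup.mem_addSubgroupOf, Submodule.mem_toAddSubgroup]
    rw [show ((x : Fin n → ℝ) ∈ Submodule.span ℤ (Set.range A.transpose)) ↔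
        ((x : Fin n → ℝ) ∈ lat A) from Iff.rfl, mem_latA_iff hn d A hAdef]
    obtain ⟨z, hz⟩ := hint x
    have e := hflr x z hz
    have hfx : f x = ((2 * z Lidx - ∑ j, z j : ℤ) : ZMod d) := by
      show ((2 * ⌊(x : Fin n → ℝ) Lidx⌋ - ∑ j, ⌊(x : Fin n → ℝ) j⌋ : ℤ) : ZMod d) = _
      rw [e Lidx, Finset.sum_congr rfl fun j _ => e j]
    constructor
    · intro h
      rw [hfx, ZMod.intCast_zmod_eq_zero_iff_dvd] at h
      exact ⟨z, hz, h⟩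
    · rintro ⟨w, hw, hdvd⟩
      have hzw : z = w := by
        funext i
        have := (hz i).symm.trans (hw i)
        exact_mod_cast this
      rw [hfx, hzw, ZMod.intCast_zmod_eq_zero_iff_dvd]
      exact hdvd
  have hsurj : Function.Surjective f := by
    intro w
    obtain ⟨k, hk⟩ := ZMod.intCast_surjective w
    refine ⟨⟨fun i => if i = Lidx then (k : ℝ) else 0,
      (hmemZ _).mpr ⟨fun i => if i = Lidx then k else 0, fun i => by by_cases h : i = Lidx <;> simp [h]⟩⟩, ?_⟩
    have e : ∀ i, ⌊(fun i => if i = Lidx then (k : ℝ) else 0) i⌋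
        = if i = Lidx then k else 0 := by
      intro i; by_cases h : i = Lidx <;> simp [h]
    show ((2 * ⌊(fun i => if i = Lidx then (k : ℝ) else 0) Lidx⌋
        - ∑ j, ⌊(fun i => if i = Lidx then (k : ℝ) else 0) j⌋ : ℤ) : ZMod d) = w
    rw [e Lidx, Finset.sum_congr rfl fun j _ => e j, if_pos rfl, Finset.sum_ite_eq']
    simp [hk, two_mul, add_sub_cancel_right]
  rw [AddSubgroup.relIndex, ← hker, AddSubgroup.index_ker]
  rw [AddMonoidHom.range_eq_top.mpr hsurj]
  rw [Nat.card_congr AddSubgroup.topEquiv.toEquiv, Nat.card_zmod]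


theorem stmt8 {n : ℕ} (hn : 2 ≤ n) (d : ℕ) (hd : 1 < d)
    (A : Matrix (Fin n) (Fin n) ℝ)
    (hAdef : ∀ i j, A i j =
      if (i : ℕ) = n - 1 then (if (j : ℕ) = n - 1 then (d : ℝ) else 1)
      else (if i = j then 1 else 0)) :
    (∀ M : Submodule ℤ (Fin n → ℝ), M ≤ lat A →
        (∃ b : Fin n → Fin n → ℝ, LinearIndependent ℝ b ∧
          M = Submodule.span ℤ (Set.range b) ∧ ∀ i, ∃! j, b i j ≠ 0) →
        d ^ (n - 1) ≤ idx M (lat A)) ∧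
      Submodule.span ℤ
          (Set.range fun i : Fin n => (d : ℝ) • (Pi.single i 1 : Fin n → ℝ)) ≤ lat A ∧
      idx (Submodule.span ℤ
          (Set.range fun i : Fin n => (d : ℝ) • (Pi.single i 1 : Fin n → ℝ))) (lat A) =
        d ^ (n - 1) := by
  have hlt : n - 1 < n := by omega
  have hd0 : 0 < d := by omega
  have hn1 : n - 1 + 1 = n := by omega
  set Li : Fin n := ⟨n - 1, hlt⟩ with hLi
  have hmemL : ∀ x : Fin n → ℝ, x ∈ lat A ↔
      ∃ z : Fin n → ℤ, (∀ i, x i = z i) ∧ (d : ℤ) ∣ (2 * z Li - ∑ j, z j) := fun x =>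
    mem_latA_iff hn d A hAdef x
  -- the standard lattice ℤⁿ
  have hLZ : (lat A).toAddSubgroup ≤
      (rect (fun _ => 1) : Submodule ℤ (Fin n → ℝ)).toAddSubgroup := by
    intro x hx
    rw [Submodule.mem_toAddSubgroup] at hx ⊢
    obtain ⟨z, hz, -⟩ := (hmemL x).mp hx
    exact (mem_rect_one_iff x).mpr ⟨z, hz⟩
  -- part 2 : N ≤ lat A
  have hNfun : (fun i : Fin n => (d : ℝ) • (Pi.single i 1 : Fin n → ℝ)) =
      (fun j : Fin n => (((fun _ : Fin n => (d : ℤ)) j : ℤ) : ℝ) •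
        (Pi.single j 1 : Fin n → ℝ)) := by
    funext i; norm_num
  have hNrect : Submodule.span ℤ
      (Set.range fun i : Fin n => (d : ℝ) • (Pi.single i 1 : Fin n → ℝ)) =
      rect (fun _ : Fin n => (d : ℤ)) := by
    rw [rect, hNfun]
  have hNle : Submodule.span ℤ
      (Set.range fun i : Fin n => (d : ℝ) • (Pi.single i 1 : Fin n → ℝ)) ≤ lat A := by
    rw [Submodule.span_le]
    rintro _ ⟨i, rfl⟩
    refine (hmemL _).mpr ⟨fun j => if j = i then (d : ℤ) else 0, fun j => ?_, ?_⟩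
    · by_cases h : j = i <;> simp [Pi.single_apply, h]
    · show (d : ℤ) ∣ 2 * (if Li = i then (d : ℤ) else 0)
        - ∑ j, (if j = i then (d : ℤ) else 0)
      rw [Finset.sum_ite_eq' Finset.univ i, if_pos (Finset.mem_univ i)]
      by_cases h : Li = i
      · rw [if_pos h]
        exact ⟨1, by ring⟩
      · rw [if_neg h]
        exact ⟨-1, by ring⟩
  refine ⟨?_, hNle, ?_⟩
  · -- part 1
    rintro M hML ⟨b, hbli, hMspan, hbuniq⟩
    choose σ hσ hσu using hbuniq
    have hbform : ∀ i, b i = (b i (σ i)) • (Pi.single (σ i) 1 : Fin n → ℝ) := by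
      intro i
      funext k
      by_cases h : k = σ i
      · subst h; simp
      · have hbk : b i k = 0 := by
          by_contra hc
          exact h (hσu i k hc)
        simp [Pi.single_apply, h, hbk]
    have hbL : ∀ i, b i ∈ lat A := by
      intro i
      apply hML
      rw [hMspan]
      exact Submodule.subset_span ⟨i, rfl⟩
    have hdvd : ∀ i, ∃ m : ℤ, b i (σ i) = ((d * m : ℤ) : ℝ) ∧ m ≠ 0 := by
      intro i
      obtain ⟨z, hz, hdv⟩ := (hmemL (b i)).mp (hbL i)
      have hz0 : ∀ k, k ≠ σ i → z k = 0 := by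
        intro k hk
        have h1 : b i k = 0 := by
          by_contra hc; exact hk (hσu i k hc)
        have h2 : ((z k : ℤ) : ℝ) = 0 := by rw [← hz k, h1]
        exact_mod_cast h2
      have hsum : ∑ j, z j = z (σ i) :=
        Finset.sum_eq_single (σ i) (fun k _ hk => hz0 k hk)
          (fun h => absurd (Finset.mem_univ _) h)
      have hdz : (d : ℤ) ∣ z (σ i) := by
        rw [hsum] at hdv
        by_cases h : Li = σ i
        · rw [h, show 2 * z (σ i) - z (σ i) = z (σ i) from by ring] at hdv
          exact hdv
        · rw [hz0 Li h, show 2 * (0 : ℤ) - z (σ i) = -(z (σ i)) from by ring] at hdv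
          exact dvd_neg.mp hdv
      obtain ⟨m, hm⟩ := hdz
      refine ⟨m, by rw [hz (σ i), hm], fun hm0 => ?_⟩
      apply hσ i
      rw [hz (σ i), hm, hm0]
      simp
    choose m hm hm0 using hdvd
    -- σ is injective
    have hσinj : Function.Injective σ := by
      intro i i' h
      by_contra hne
      set c : ℝ := b i (σ i) with hc
      set c' : ℝ := b i' (σ i') with hc'
      have hli := linearIndependent_iff'.mp hbli {i, i'}
        (fun k => if k = i then c' else if k = i' then -c else 0)
      have hbi : b i = c • (Pi.single (σ i') 1 : Fin n → ℝ) := by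
        rw [hbform i, ← hc, h]
      have hbi' : b i' = c' • (Pi.single (σ i') 1 : Fin n → ℝ) := by
        rw [hbform i', ← hc']
      have hsum0 : ∑ k ∈ ({i, i'} : Finset (Fin n)),
          (if k = i then c' else if k = i' then -c else 0) • b k = 0 := by
        rw [Finset.sum_pair hne]
        rw [if_pos rfl, if_neg (Ne.symm hne), if_pos rfl]
        rw [hbi, hbi', smul_smul, smul_smul, ← add_smul,
          show c' * c + -c * c' = 0 from by ring, zero_smul]
      have := hli hsum0 i' (by simp)
      rw [if_neg (Ne.symm hne), if_pos rfl] at this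
      exact hσ i (hc ▸ (neg_eq_zero.mp this))
    have hσbij : Function.Bijective σ := Finite.injective_iff_bijective.mp hσinj
    let e : Fin n ≃ Fin n := Equiv.ofBijective σ hσbij
    set a : Fin n → ℤ := fun j => (d : ℤ) * m (e.symm j) with ha
    have hb' : ∀ i, b i = ((a (σ i) : ℤ) : ℝ) • (Pi.single (σ i) 1 : Fin n → ℝ) := by
      intro i
      have h1 : e.symm (σ i) = i := e.symm_apply_apply i
      rw [hbform i, hm i, ha]
      simp only [h1]
    have hrange : Set.range b =
        Set.range (fun j => ((a j : ℤ) : ℝ) • (Pi.single j 1 : Fin n → ℝ)) := by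
      have : b = (fun j => ((a j : ℤ) : ℝ) • (Pi.single j 1 : Fin n → ℝ)) ∘ σ := by
        funext i; exact hb' i
      rw [this, Function.Surjective.range_comp hσbij.2]
    have hMrect : M = rect a := by
      rw [hMspan, rect, hrange]
    have hMZ : AddSubgroup.relIndex M.toAddSubgroup
        (rect (fun _ => 1) : Submodule ℤ (Fin n → ℝ)).toAddSubgroup
        = ∏ j, (a j).natAbs := by
      rw [hMrect]; exact relindex_rect a
    have hML' : M.toAddSubgroup ≤ (lat A).toAddSubgroup := fun x hx => hML hx
    have hmul := AddSubgroup.relIndex_mul_relIndex M.toAddSubgroup (lat A).toAddSubgroup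
      (rect (fun _ => 1) : Submodule ℤ (Fin n → ℝ)).toAddSubgroup hML' hLZ
    rw [hMZ, relindex_latA hn d A hAdef] at hmul
    have hprod : d ^ n ≤ ∏ j, (a j).natAbs := by
      calc d ^ n = ∏ _j : Fin n, d := by
            rw [Finset.prod_const, Finset.card_univ, Fintype.card_fin]
        _ ≤ ∏ j, (a j).natAbs := by
            apply Finset.prod_le_prod'
            intro j _
            rw [ha]
            rw [Int.natAbs_mul, Int.natAbs_natCast]
            have : 1 ≤ (m (e.symm j)).natAbs := Nat.one_le_iff_ne_zero.mpr
              (Int.natAbs_ne_zero.mpr (hm0 (e.symm j)))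
            calc d = d * 1 := (mul_one d).symm
              _ ≤ d * (m (e.symm j)).natAbs := Nat.mul_le_mul_left d this
      
    have hfinal : d ^ (n - 1) * d ≤ idx M (lat A) * d := by
      rw [idx, hmul]
      calc d ^ (n - 1) * d = d ^ n := by rw [← pow_succ, hn1]
        _ ≤ ∏ j, (a j).natAbs := hprod
    exact Nat.le_of_mul_le_mul_right hfinal hd0
  · -- part 3
    have hNle' : (Submodule.span ℤ
        (Set.range fun i : Fin n => (d : ℝ) • (Pi.single i 1 : Fin n → ℝ))).toAddSubgroup ≤
        (lat A).toAddSubgroup := fun x hx => hNle hx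
    have hmul := AddSubgroup.relIndex_mul_relIndex
      (Submodule.span ℤ
        (Set.range fun i : Fin n => (d : ℝ) • (Pi.single i 1 : Fin n → ℝ))).toAddSubgroup
      (lat A).toAddSubgroup
      (rect (fun _ => 1) : Submodule ℤ (Fin n → ℝ)).toAddSubgroup hNle' hLZ
    have hNZ : AddSubgroup.relIndex (Submodule.span ℤ
        (Set.range fun i : Fin n => (d : ℝ) • (Pi.single i 1 : Fin n → ℝ))).toAddSubgroup
        (rect (fun _ => 1) : Submodule ℤ (Fin n → ℝ)).toAddSubgroup = d ^ n := by
      rw [hNrect, relindex_rect]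
      simp [Finset.prod_const, Finset.card_univ]
    rw [hNZ, relindex_latA hn d A hAdef] at hmul
    have : idx (Submodule.span ℤ
        (Set.range fun i : Fin n => (d : ℝ) • (Pi.single i 1 : Fin n → ℝ))) (lat A) * d
        = d ^ (n - 1) * d := by
      rw [idx, hmul, ← pow_succ, hn1]
    exact Nat.eq_of_mul_eq_mul_right hd0 this
end

section
/- Let τ = a + bi with b > 0, and suppose there exists t ∈ ℝ \ {0} with a − bt ∈ ℚ and a + b/t ∈ ℚ. Then the lattice Γ_τ = span_ℤ{(1,0),(a,b)} ⊂ ℝ² is virtually rectangular: with U_t = (1/√(1+t²))·[[1, −t],[t, 1]] (a rotation), the lattice U_t Γ_τ is spanned by (1/√(1+t²))·(1, t) and (1/√(1+t²))·(a−bt, at+b), each row of the corresponding basis matrix has rational dimension 1, and hence U_t Γ_τ contains a finite-index rectangular sublattice. -/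
/-- A full-rank lattice is rectangular if it has a basis of pairwise
orthogonal (nonzero, linearly independent) vectors. -/
def IsRectangular {n : ℕ} (M : Submodule ℤ (Fin n → ℝ)) : Prop :=
  ∃ b : Fin n → Fin n → ℝ, LinearIndependent ℝ b ∧
    (∀ i j, i ≠ j → ∑ k, b i k * b j k = 0) ∧
    M = Submodule.span ℤ (Set.range b)

/-- A lattice is virtually rectangular if it contains a rectangular sublattice
of finite index. -/
def VirtuallyRectangular {n : ℕ} (L : Submodule ℤ (Fin n → ℝ)) : Prop :=
  ∃ M : Submodule ℤ (Fin n → ℝ), M ≤ L ∧ IsRectangular M ∧ idx M L ≠ 0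

lemma idx_ne_zero' {n : ℕ} {M L : Submodule ℤ (Fin n → ℝ)} (hfg : L.FG) {N : ℤ}
    (hN : N ≠ 0) (h : ∀ x ∈ L, N • x ∈ M) : idx M L ≠ 0 := by
  have hFGgrp : AddGroup.FG ↥L.toAddSubgroup :=
    (AddGroup.fg_iff_addSubgroup_fg _).mpr ((Submodule.fg_iff_addSubgroup_fg L).mp hfg)
  have hfin : Finite (↥L.toAddSubgroup ⧸ M.toAddSubgroup.addSubgroupOf L.toAddSubgroup) := by
    apply AddCommGroup.finite_of_fg_torsion
    intro x
    induction x using QuotientAddGroup.induction_on with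
    | _ g =>
      rw [isOfFinAddOrder_iff_nsmul_eq_zero]
      refine ⟨N.natAbs, Int.natAbs_pos.mpr hN, ?_⟩
      rw [← QuotientAddGroup.mk_nsmul, QuotientAddGroup.eq_zero_iff,
        AddSubgroup.mem_addSubgroupOf]
      have hcoe : ((N.natAbs • g : ↥L.toAddSubgroup) : Fin n → ℝ)
          = (N.natAbs : ℤ) • (g : Fin n → ℝ) := by
        rw [natCast_zsmul]; rfl
      rw [hcoe]
      rcases Int.natAbs_eq N with hN' | hN'
      · rw [← hN']; exact h _ g.2
      · have : ((N.natAbs : ℤ)) • (g : Fin n → ℝ) = -(N • (g : Fin n → ℝ)) := by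
          rw [← neg_smul]; congr 1; omega
        rw [this]; exact M.neg_mem (h _ g.2)
  exact AddSubgroup.index_ne_zero_of_finite

theorem stmt10 (a b t : ℝ) (hb : 0 < b) (ht : t ≠ 0)
    (h1 : ∃ r : ℚ, a - b * t = (r : ℝ)) (h2 : ∃ r : ℚ, a + b / t = (r : ℝ)) :
    (Submodule.map
        ((((Real.sqrt (1 + t ^ 2))⁻¹ •
            Matrix.of ![![(1 : ℝ), -t], ![t, 1]]).mulVecLin).restrictScalars ℤ)
        (Submodule.span ℤ ({![(1 : ℝ), 0], ![a, b]} : Set (Fin 2 → ℝ))) =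
      Submodule.span ℤ
        ({(Real.sqrt (1 + t ^ 2))⁻¹ • ![(1 : ℝ), t],
          (Real.sqrt (1 + t ^ 2))⁻¹ • ![a - b * t, a * t + b]} : Set (Fin 2 → ℝ))) ∧
    ratDim ((Real.sqrt (1 + t ^ 2))⁻¹ • ![(1 : ℝ), a - b * t]) = 1 ∧
    ratDim ((Real.sqrt (1 + t ^ 2))⁻¹ • ![t, a * t + b]) = 1 ∧
    VirtuallyRectangular
      (Submodule.map
        ((((Real.sqrt (1 + t ^ 2))⁻¹ •
            Matrix.of ![![(1 : ℝ), -t], ![t, 1]]).mulVecLin).restrictScalars ℤ)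
        (Submodule.span ℤ ({![(1 : ℝ), 0], ![a, b]} : Set (Fin 2 → ℝ)))) := by
  obtain ⟨r1, hq1⟩ := h1
  obtain ⟨r2, hq2⟩ := h2
  set c : ℝ := (Real.sqrt (1 + t ^ 2))⁻¹ with hcdef
  have hs : 0 < Real.sqrt (1 + t ^ 2) := Real.sqrt_pos.mpr (by positivity)
  have hc : c ≠ 0 := inv_ne_zero (ne_of_gt hs)
  have hq2t : a * t + b = (r2 : ℝ) * t := by
    rw [← hq2]; field_simp
  -- r1 ≠ r2 over ℝ
  have hr12 : (r1 : ℝ) ≠ (r2 : ℝ) := by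
    intro heq
    have h1' : (r1 : ℝ) * t = (a - b * t) * t := by rw [hq1]
    have hbb : b * (t ^ 2 + 1) = 0 := by
      rw [heq] at h1'
      linear_combination hq2t + h1'
    have : (0 : ℝ) < b * (t ^ 2 + 1) := by positivity
    linarith
  -- Part 1 : the image of the lattice
  have hf1 : (((c • Matrix.of ![![(1 : ℝ), -t], ![t, 1]]).mulVecLin).restrictScalars ℤ)
      ![(1 : ℝ), 0] = c • ![(1 : ℝ), t] := by
    funext i
    fin_cases i <;>
      simp [Matrix.mulVecLin_apply, Matrix.mulVec, dotProduct, Fin.sum_univ_two] <;> ring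
  have hf2 : (((c • Matrix.of ![![(1 : ℝ), -t], ![t, 1]]).mulVecLin).restrictScalars ℤ)
      ![a, b] = c • ![a - b * t, a * t + b] := by
    funext i
    fin_cases i <;>
      simp [Matrix.mulVecLin_apply, Matrix.mulVec, dotProduct, Fin.sum_univ_two] <;> ring
  have hmap : Submodule.map
        (((c • Matrix.of ![![(1 : ℝ), -t], ![t, 1]]).mulVecLin).restrictScalars ℤ)
        (Submodule.span ℤ ({![(1 : ℝ), 0], ![a, b]} : Set (Fin 2 → ℝ))) =
      Submodule.span ℤ
        ({c • ![(1 : ℝ), t], c • ![a - b * t, a * t + b]} : Set (Fin 2 → ℝ)) := by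
    rw [Submodule.map_span]
    congr 1
    rw [Set.image_insert_eq, Set.image_singleton, hf1, hf2]
  refine ⟨hmap, ?_, ?_, ?_⟩
  · -- ratDim 1
    unfold ratDim
    have hv : c • ![(1 : ℝ), a - b * t] = ![c * 1, c * (r1 : ℝ)] := by
      funext i; fin_cases i <;> simp [hq1]
    rw [hv, Matrix.range_cons_cons_empty]
    have hspan : Submodule.span ℚ ({c * 1, c * (r1 : ℝ)} : Set ℝ) = ℚ ∙ c := by
      apply le_antisymm
      · rw [Submodule.span_le]
        rintro x (rfl | rfl)
        · exact Submodule.mem_span_singleton.mpr ⟨1, by simp⟩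
        · exact Submodule.mem_span_singleton.mpr ⟨r1, by rw [Rat.smul_def]; ring⟩
      · rw [Submodule.span_singleton_le_iff_mem]
        exact Submodule.subset_span (Set.mem_insert_iff.mpr (Or.inl (mul_one c).symm))
    rw [hspan]
    exact finrank_span_singleton hc
  · -- ratDim 2
    unfold ratDim
    have hv : c • ![t, a * t + b] = ![c * t, c * ((r2 : ℝ) * t)] := by
      funext i; fin_cases i <;> simp [hq2t]
    rw [hv, Matrix.range_cons_cons_empty]
    have hct : c * t ≠ 0 := mul_ne_zero hc ht
    have hspan : Submodule.span ℚ ({c * t, c * ((r2 : ℝ) * t)} : Set ℝ) = ℚ ∙ (c * t) := by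
      apply le_antisymm
      · rw [Submodule.span_le]
        rintro x (rfl | rfl)
        · exact Submodule.mem_span_singleton_self _
        · exact Submodule.mem_span_singleton.mpr ⟨r2, by rw [Rat.smul_def]; ring⟩
      · rw [Submodule.span_singleton_le_iff_mem]
        exact Submodule.subset_span (Set.mem_insert _ _)
    rw [hspan]
    exact finrank_span_singleton hct
  · -- virtually rectangular
    rw [hmap, hq1, hq2t]
    -- rational bookkeeping
    have e1 : (r1.num : ℝ) = (r1 : ℝ) * (r1.den : ℝ) := by
      have hden : ((r1.den : ℝ)) ≠ 0 := Nat.cast_ne_zero.mpr r1.den_nz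
      rw [Rat.cast_def]
      field_simp
    have e2 : (r2.num : ℝ) = (r2 : ℝ) * (r2.den : ℝ) := by
      have hden : ((r2.den : ℝ)) ≠ 0 := Nat.cast_ne_zero.mpr r2.den_nz
      rw [Rat.cast_def]
      field_simp
    set d : ℤ := (r1.den : ℤ) * (r2.den : ℤ) with hddef
    set p1 : ℤ := r1.num * (r2.den : ℤ) with hp1def
    set p2 : ℤ := r2.num * (r1.den : ℤ) with hp2def
    have hdR : (d : ℝ) ≠ 0 := by
      rw [hddef]; push_cast
      exact mul_ne_zero (Nat.cast_ne_zero.mpr r1.den_nz) (Nat.cast_ne_zero.mpr r2.den_nz)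
    have ep1 : (p1 : ℝ) = (r1 : ℝ) * (d : ℝ) := by
      rw [hp1def, hddef]; push_cast; rw [e1]; ring
    have ep2 : (p2 : ℝ) = (r2 : ℝ) * (d : ℝ) := by
      rw [hp2def, hddef]; push_cast; rw [e2]; ring
    have hp : p1 ≠ p2 := by
      intro he
      apply hr12
      have : (p1 : ℝ) = (p2 : ℝ) := by exact_mod_cast he
      rw [ep1, ep2] at this
      exact mul_right_cancel₀ hdR this
    set k : ℤ := p1 - p2 with hkdef
    have hk0 : k ≠ 0 := sub_ne_zero.mpr hp
    have hkR : (k : ℝ) ≠ 0 := Int.cast_ne_zero.mpr hk0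
    have ekk : (k : ℝ) = (r1 : ℝ) * (d : ℝ) - (r2 : ℝ) * (d : ℝ) := by
      rw [hkdef]; push_cast [← ep1, ← ep2]; ring
    set v : Fin 2 → ℝ := ![(k : ℝ) * c, 0] with hvdef
    set u : Fin 2 → ℝ := ![0, (k : ℝ) * (c * t)] with hudef
    set w1 : Fin 2 → ℝ := c • ![(1 : ℝ), t] with hw1def
    set w2 : Fin 2 → ℝ := c • ![(r1 : ℝ), (r2 : ℝ) * t] with hw2def
    refine ⟨Submodule.span ℤ ({v, u} : Set (Fin 2 → ℝ)), ?_, ?_, ?_⟩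
    · rw [Submodule.span_le]
      rintro x (rfl | rfl)
      · have hx : v = (-p2) • w1 + d • w2 := by
          funext i
          fin_cases i <;>
            simp [hvdef, hw1def, hw2def, zsmul_eq_mul] <;> push_cast
          · linear_combination c * ekk + c * ep2
          · linear_combination (c * t) * ep2
        rw [hx]
        exact add_mem
          (Submodule.smul_mem _ _ (Submodule.subset_span (Set.mem_insert _ _)))
          (Submodule.smul_mem _ _ (Submodule.subset_span (Set.mem_insert_of_mem _ rfl)))
      · have hx : u = p1 • w1 + (-d) • w2 := by
          funext i
          fin_cases i <;>
            simp [hudef, hw1def, hw2def, zsmul_eq_mul] <;> push_cast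
          · linear_combination (-c) * ep1
          · linear_combination (c * t) * ekk - (c * t) * ep1
        rw [hx]
        exact add_mem
          (Submodule.smul_mem _ _ (Submodule.subset_span (Set.mem_insert _ _)))
          (Submodule.smul_mem _ _ (Submodule.subset_span (Set.mem_insert_of_mem _ rfl)))
    · refine ⟨![v, u], ?_, ?_, by rw [Matrix.range_cons_cons_empty]⟩
      · rw [linearIndependent_fin2]
        constructor
        · intro h
          have h1 := congrFun h 1
          simp [hudef, hkR, hc, ht] at h1
        · intro α h
          have h0 := congrFun h 0
          simp [hudef, hvdef, hkR, hc] at h0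
      · intro i j hij
        fin_cases i <;> fin_cases j <;>
          simp_all [Fin.sum_univ_two, hvdef, hudef]
    · apply idx_ne_zero' (N := k * d)
      · exact Submodule.fg_span ((Set.finite_singleton _).insert _)
      · exact mul_ne_zero hk0 (by
          intro h
          apply hdR
          rw [h]; simp)
      · intro x hx
        induction hx using Submodule.span_induction with
        | mem y hy =>
          rcases hy with rfl | rfl
          · have hx : (k * d) • w1 = d • v + d • u := by
              funext i
              fin_cases i <;>
                simp [hvdef, hudef, hw1def, zsmul_eq_mul] <;> push_cast <;> ring
            rw [hx]
            exact add_mem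
              (Submodule.smul_mem _ _ (Submodule.subset_span (Set.mem_insert _ _)))
              (Submodule.smul_mem _ _ (Submodule.subset_span (Set.mem_insert_of_mem _ rfl)))
          · have hx : (k * d) • w2 = p1 • v + p2 • u := by
              funext i
              fin_cases i <;>
                simp [hvdef, hudef, hw2def, zsmul_eq_mul] <;> push_cast
              · linear_combination (-((k : ℝ) * c)) * ep1
              · linear_combination (-((k : ℝ) * (c * t))) * ep2
            rw [hx]
            exact add_mem
              (Submodule.smul_mem _ _ (Submodule.subset_span (Set.mem_insert _ _)))
              (Submodule.smul_mem _ _ (Submodule.subset_span (Set.mem_insert_of_mem _ rfl)))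
        | zero => rw [smul_zero]; exact Submodule.zero_mem _
        | add y z _ _ hy hz => rw [smul_add]; exact add_mem hy hz
        | smul z y _ hy => rw [smul_comm]; exact Submodule.smul_mem _ _ hy
end

section
/- Let τ = a + bi with b > 0, a ∉ ℚ, and suppose t ∈ ℝ \ {0} satisfies a − bt = u/v and a + b/t = q/w for integers u, q and positive integers v, w (fractions in lowest terms). Then the lattice Γ_τ = span_ℤ{(1,0),(a,b)} contains a rectangular sublattice Γ' of index [Γ_τ : Γ'] = |b|·v·w·(t²+1)/|t|. -/
/-- Index of the subgroup of ℤ² spanned by (-u,v) and (-q,w). -/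
lemma index_span_pair (u v q w : ℤ) (hcop : IsCoprime u v)
    (hN : v * q - u * w ≠ 0) :
    (Submodule.span ℤ ({(-u, v), (-q, w)} : Set (ℤ × ℤ))).toAddSubgroup.index
      = (v * q - u * w).natAbs := by
  set N : ℤ := v * q - u * w with hNdef
  set n : ℕ := N.natAbs with hn
  have ψlaw : ∀ p q' : ℤ × ℤ,
      ((↑(v * (p + q').1 + u * (p + q').2) : ZMod n)) =
        ((v * p.1 + u * p.2 : ℤ) : ZMod n) + ((v * q'.1 + u * q'.2 : ℤ) : ZMod n) := by
    intro p q'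
    simp only [Prod.fst_add, Prod.snd_add]
    push_cast
    ring
  set ψ : ℤ × ℤ →+ ZMod n :=
    AddMonoidHom.mk' (fun p => ((v * p.1 + u * p.2 : ℤ) : ZMod n)) ψlaw with hψ
  have hψapp : ∀ p : ℤ × ℤ, ψ p = ((v * p.1 + u * p.2 : ℤ) : ZMod n) := fun p => rfl
  have hker : ψ.ker = (Submodule.span ℤ ({(-u, v), (-q, w)} : Set (ℤ × ℤ))).toAddSubgroup := by
    ext p
    simp only [AddMonoidHom.mem_ker, hψapp, Submodule.mem_toAddSubgroup,
      Submodule.mem_span_pair]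
    constructor
    · intro hp
      have hdvd : N ∣ v * p.1 + u * p.2 := by
        rw [← Int.natAbs_dvd]
        exact (ZMod.intCast_zmod_eq_zero_iff_dvd _ _).mp hp
      obtain ⟨k, hk⟩ := hdvd
      have e1 : v * (p.1 * w + q * p.2) = N * (w * k + p.2) := by
        linear_combination w * hk
      have e2 : u * (p.1 * w + q * p.2) = N * (-p.1 + q * k) := by
        linear_combination q * hk
      obtain ⟨x, y, hxy⟩ := hcop
      have h3 : N ∣ p.1 * w + q * p.2 := by
        have : p.1 * w + q * p.2 =
            x * (u * (p.1 * w + q * p.2)) + y * (v * (p.1 * w + q * p.2)) := by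
          linear_combination (-(p.1 * w + q * p.2)) * hxy
        rw [this, e1, e2]
        exact dvd_add ⟨x * (-p.1 + q * k), by ring⟩ ⟨y * (w * k + p.2), by ring⟩
      obtain ⟨s, hs⟩ := h3
      have hvs : v * s = w * k + p.2 := by
        have : N * (v * s) = N * (w * k + p.2) := by
          rw [← e1, hs]; ring
        exact mul_left_cancel₀ hN this
      have hus : u * s = -p.1 + q * k := by
        have : N * (u * s) = N * (-p.1 + q * k) := by
          rw [← e2, hs]; ring
        exact mul_left_cancel₀ hN this
      refine ⟨s, -k, ?_⟩
      have h1 : s • ((-u, v) : ℤ × ℤ) + (-k) • ((-q, w) : ℤ × ℤ) =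
          (s * (-u) + (-k) * (-q), s * v + (-k) * w) := by
        simp [Prod.ext_iff, smul_eq_mul]
      rw [h1]
      have : s * (-u) + (-k) * (-q) = p.1 := by linear_combination -hus
      have h2 : s * v + (-k) * w = p.2 := by linear_combination hvs
      rw [this, h2]
    · rintro ⟨c, d, rfl⟩
      have : (c • ((-u, v) : ℤ × ℤ) + d • ((-q, w) : ℤ × ℤ)) =
          (c * (-u) + d * (-q), c * v + d * w) := by
        simp [Prod.ext_iff, smul_eq_mul]
      rw [this]
      show ((v * (c * (-u) + d * (-q)) + u * (c * v + d * w) : ℤ) : ZMod n) = 0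
      have : v * (c * (-u) + d * (-q)) + u * (c * v + d * w) = N * (-d) := by ring
      rw [this]
      rw [ZMod.intCast_zmod_eq_zero_iff_dvd]
      exact Dvd.dvd.mul_right (Int.natAbs_dvd.mpr dvd_rfl) _
  have hsurj : Function.Surjective ψ := by
    intro z
    obtain ⟨k, rfl⟩ := ZMod.intCast_surjective z
    obtain ⟨x, y, hxy⟩ := hcop
    refine ⟨(y * k, x * k), ?_⟩
    rw [hψapp]
    have : v * (y * k) + u * (x * k) = k := by linear_combination k * hxy
    rw [this]
  calc (Submodule.span ℤ ({(-u, v), (-q, w)} : Set (ℤ × ℤ))).toAddSubgroup.index = ψ.ker.index := by rw [hker]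
    _ = Nat.card (ZMod n) :=
        Nat.card_congr (QuotientAddGroup.quotientKerEquivOfSurjective ψ hsurj).toEquiv
    _ = n := Nat.card_zmod n

/-- Uniqueness of ℤ-coordinates in the basis (1,0), (a,b). -/
lemma coords_unique (a b : ℝ) (hb : b ≠ 0) (m n c d : ℤ)
    (h : m • ![(1 : ℝ), 0] + n • ![a, b] = c • ![(1 : ℝ), 0] + d • ![a, b]) :
    m = c ∧ n = d := by
  have h1 := congr_fun h 1
  have h0 := congr_fun h 0
  simp [zsmul_eq_mul] at h1 h0
  have hnd : n = d := by
    rcases h1 with h1 | h1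
    · exact h1
    · exact absurd h1 hb
  refine ⟨?_, hnd⟩
  have : (m : ℝ) = c := by
    have : (n : ℝ) = (d : ℝ) := by exact_mod_cast hnd
    rw [this] at h0; linarith
  exact_mod_cast this

theorem stmt11 (a b t : ℝ) (hb : 0 < b) (hirr : ∀ r : ℚ, a ≠ (r : ℝ))
    (ht : t ≠ 0) (u q : ℤ) (v w : ℕ) (hv : 0 < v) (hw : 0 < w)
    (huv : a - b * t = (u : ℝ) / (v : ℝ)) (hqw : a + b / t = (q : ℝ) / (w : ℝ))
    (huvcop : Int.gcd u (v : ℤ) = 1) (hqwcop : Int.gcd q (w : ℤ) = 1) :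
    ∃ Γ' : Submodule ℤ (Fin 2 → ℝ),
      Γ' ≤ Submodule.span ℤ ({![(1 : ℝ), 0], ![a, b]} : Set (Fin 2 → ℝ)) ∧
      IsRectangular Γ' ∧
      (idx Γ' (Submodule.span ℤ ({![(1 : ℝ), 0], ![a, b]} : Set (Fin 2 → ℝ))) : ℝ) =
        |b| * (v : ℝ) * (w : ℝ) * (t ^ 2 + 1) / |t| := by
  have hbne : b ≠ 0 := ne_of_gt hb
  have hvR : (0 : ℝ) < (v : ℝ) := by exact_mod_cast hv
  have hwR : (0 : ℝ) < (w : ℝ) := by exact_mod_cast hw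
  have hvne : (v : ℝ) ≠ 0 := ne_of_gt hvR
  have hwne : (w : ℝ) ≠ 0 := ne_of_gt hwR
  rw [eq_div_iff hvne] at huv
  rw [eq_div_iff hwne] at hqw
  have hv1 : (-u : ℤ) • ![(1 : ℝ), 0] + (v : ℤ) • ![a, b]
      = ![(v : ℝ) * b * t, (v : ℝ) * b] := by
    funext i
    fin_cases i <;>
      simp [zsmul_eq_mul] <;>
      push_cast <;>
      linear_combination huv
  have hv2 : (-q : ℤ) • ![(1 : ℝ), 0] + (w : ℤ) • ![a, b]
      = ![-((w : ℝ) * b) / t, (w : ℝ) * b] := by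
    funext i
    fin_cases i <;>
      simp [zsmul_eq_mul] <;>
      push_cast <;>
      linear_combination hqw
  set Γ : Submodule ℤ (Fin 2 → ℝ) :=
    Submodule.span ℤ ({![(1 : ℝ), 0], ![a, b]} : Set (Fin 2 → ℝ)) with hΓ
  set Γ' : Submodule ℤ (Fin 2 → ℝ) :=
    Submodule.span ℤ ({![(v : ℝ) * b * t, (v : ℝ) * b],
      ![-((w : ℝ) * b) / t, (w : ℝ) * b]} : Set (Fin 2 → ℝ)) with hΓ'
  have m1 : ![(1 : ℝ), 0] ∈ Γ := Submodule.subset_span (by simp)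
  have m2 : ![a, b] ∈ Γ := Submodule.subset_span (by simp)
  have mv1 : ![(v : ℝ) * b * t, (v : ℝ) * b] ∈ Γ := by
    rw [← hv1]
    exact add_mem (Submodule.smul_mem _ _ m1) (Submodule.smul_mem _ _ m2)
  have mv2 : ![-((w : ℝ) * b) / t, (w : ℝ) * b] ∈ Γ := by
    rw [← hv2]
    exact add_mem (Submodule.smul_mem _ _ m1) (Submodule.smul_mem _ _ m2)
  refine ⟨Γ', ?_, ?_, ?_⟩
  · rw [hΓ', Submodule.span_le]
    intro x hx
    simp only [Set.mem_insert_iff, Set.mem_singleton_iff] at hx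
    rcases hx with rfl | rfl
    · exact mv1
    · exact mv2
  · refine ⟨![![(v : ℝ) * b * t, (v : ℝ) * b], ![-((w : ℝ) * b) / t, (w : ℝ) * b]],
      ?_, ?_, ?_⟩
    · rw [linearIndependent_fin2]
      simp only [Matrix.cons_val_one, Matrix.head_cons, Matrix.cons_val_zero]
      constructor
      · intro h
        have h1 := congr_fun h 1
        simp only [Matrix.cons_val_one, Matrix.head_cons, Pi.zero_apply] at h1
        exact (mul_ne_zero hwne hbne) h1
      · intro c hc
        have h1 := congr_fun hc 1
        have h0 := congr_fun hc 0
        simp only [Pi.smul_apply, smul_eq_mul, Matrix.cons_val_zero,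
          Matrix.cons_val_one, Matrix.head_cons] at h1 h0
        field_simp at h0
        nlinarith [h0, h1, mul_pos hvR hb, mul_self_nonneg t, sq_nonneg t]
    · intro i j hij
      fin_cases i <;> fin_cases j <;>
        first
          | exact absurd rfl hij
          | (rw [Fin.sum_univ_two]
             simp only [Fin.mk_one, Fin.zero_eta, Matrix.cons_val_zero, Matrix.cons_val_one, Matrix.head_cons]
             field_simp
             ring)
    · rw [hΓ']
      have hr : Set.range ![![(v : ℝ) * b * t, (v : ℝ) * b],
          ![-((w : ℝ) * b) / t, (w : ℝ) * b]] =
          ({![(v : ℝ) * b * t, (v : ℝ) * b],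
            ![-((w : ℝ) * b) / t, (w : ℝ) * b]} : Set (Fin 2 → ℝ)) := by
        ext x
        simp only [Set.mem_range, Fin.exists_fin_two, Matrix.cons_val_zero,
          Matrix.cons_val_one, Matrix.head_cons, Set.mem_insert_iff,
          Set.mem_singleton_iff]
        tauto
      rw [hr]
  · -- index computation
    have fmem : ∀ p : ℤ × ℤ, p.1 • ![(1 : ℝ), 0] + p.2 • ![a, b] ∈ Γ.toAddSubgroup := by
      intro p
      rw [Submodule.mem_toAddSubgroup]
      exact add_mem (Submodule.smul_mem _ _ m1) (Submodule.smul_mem _ _ m2)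
    set f : ℤ × ℤ →+ Γ.toAddSubgroup :=
      AddMonoidHom.mk' (fun p => ⟨p.1 • ![(1 : ℝ), 0] + p.2 • ![a, b], fmem p⟩)
        (by
          intro p q'
          apply Subtype.ext
          show ((p + q').1) • ![(1 : ℝ), 0] + ((p + q').2) • ![a, b] =
            (p.1 • ![(1 : ℝ), 0] + p.2 • ![a, b]) +
              (q'.1 • ![(1 : ℝ), 0] + q'.2 • ![a, b])
          simp only [Prod.fst_add, Prod.snd_add, add_smul]
          abel) with hf
    have hfsurj : Function.Surjective f := by
      rintro ⟨x, hx⟩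
      rw [Submodule.mem_toAddSubgroup, hΓ, Submodule.mem_span_pair] at hx
      obtain ⟨c, d, hcd⟩ := hx
      exact ⟨(c, d), Subtype.ext hcd⟩
    have hcomap : AddSubgroup.comap f (Γ'.toAddSubgroup.addSubgroupOf Γ.toAddSubgroup)
        = (Submodule.span ℤ ({(-u, (v : ℤ)), (-q, (w : ℤ))} : Set (ℤ × ℤ))).toAddSubgroup := by
      ext p
      simp only [AddSubgroup.mem_comap, AddSubgroup.mem_addSubgroupOf,
        Submodule.mem_toAddSubgroup]
      rw [show ((f p : Fin 2 → ℝ)) = p.1 • ![(1 : ℝ), 0] + p.2 • ![a, b] from rfl]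
      rw [hΓ', Submodule.mem_span_pair, Submodule.mem_span_pair]
      constructor
      · rintro ⟨c, d, hcd⟩
        rw [← hv1, ← hv2] at hcd
        have hcd' : (c * (-u) + d * (-q)) • ![(1 : ℝ), 0] +
            (c * (v : ℤ) + d * (w : ℤ)) • ![a, b] =
            p.1 • ![(1 : ℝ), 0] + p.2 • ![a, b] := by
          rw [← hcd]
          module
        obtain ⟨h1, h2⟩ := coords_unique a b hbne _ _ _ _ hcd'
        refine ⟨c, d, ?_⟩
        have heq : c • ((-u, (v : ℤ)) : ℤ × ℤ) + d • ((-q, (w : ℤ)) : ℤ × ℤ) =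
            (c * (-u) + d * (-q), c * (v : ℤ) + d * (w : ℤ)) := by
          simp [Prod.ext_iff, smul_eq_mul]
        rw [heq, h1, h2]
      · rintro ⟨c, d, hcd⟩
        refine ⟨c, d, ?_⟩
        rw [← hv1, ← hv2, ← hcd]
        simp only [Prod.smul_fst, Prod.smul_snd, Prod.fst_add, Prod.snd_add, smul_eq_mul]
        module
    have hcop : IsCoprime (u : ℤ) ((v : ℕ) : ℤ) := Int.isCoprime_iff_gcd_eq_one.mpr huvcop
    have hcast : ((((v : ℕ) : ℤ) * q - u * ((w : ℕ) : ℤ) : ℤ) : ℝ)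
        = (v : ℝ) * (w : ℝ) * b * (t ^ 2 + 1) / t := by
      push_cast
      rw [← huv, ← hqw]
      field_simp
      ring
    have hpos' : (0 : ℝ) < (v : ℝ) * (w : ℝ) * b * (t ^ 2 + 1) := by
      have h1 : (0 : ℝ) < t ^ 2 + 1 := by positivity
      have := mul_pos (mul_pos (mul_pos hvR hwR) hb) h1
      exact this
    have hN0 : ((v : ℕ) : ℤ) * q - u * ((w : ℕ) : ℤ) ≠ 0 := by
      intro h
      rw [h] at hcast
      rw [Int.cast_zero] at hcast
      exact absurd hcast.symm (div_ne_zero (ne_of_gt hpos') ht)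
    have hrel : AddSubgroup.relIndex Γ'.toAddSubgroup Γ.toAddSubgroup
        = (((v : ℕ) : ℤ) * q - u * ((w : ℕ) : ℤ)).natAbs := by
      have h1 : AddSubgroup.relIndex Γ'.toAddSubgroup Γ.toAddSubgroup
          = (Γ'.toAddSubgroup.addSubgroupOf Γ.toAddSubgroup).index := rfl
      rw [h1, ← AddSubgroup.index_comap_of_surjective _ hfsurj, hcomap]
      exact index_span_pair u ((v : ℕ) : ℤ) q ((w : ℕ) : ℤ) hcop hN0
    show ((AddSubgroup.relIndex Γ'.toAddSubgroup Γ.toAddSubgroup : ℕ) : ℝ) = _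
    rw [hrel, Nat.cast_natAbs, Int.cast_abs, hcast, abs_div, abs_of_pos hpos', abs_of_pos hb]
    ring
end

section
/- Let a ∈ ℝ, b > 0, and suppose t₁, t₂ are nonzero reals with t₁ ≠ t₂ and t₁t₂ ≠ −1, such that a − bt₁, a + b/t₁, a − bt₂, a + b/t₂ are all rational. Then a ∈ ℚ, t₁², t₂² ∈ ℚ, and b² ∈ ℚ. -/
theorem stmt12 (a b t₁ t₂ : ℝ) (hb : 0 < b)
    (ht₁ : t₁ ≠ 0) (ht₂ : t₂ ≠ 0) (hne : t₁ ≠ t₂) (hprod : t₁ * t₂ ≠ -1)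
    (h1 : ∃ r : ℚ, a - b * t₁ = (r : ℝ)) (h2 : ∃ r : ℚ, a + b / t₁ = (r : ℝ))
    (h3 : ∃ r : ℚ, a - b * t₂ = (r : ℝ)) (h4 : ∃ r : ℚ, a + b / t₂ = (r : ℝ)) :
    (∃ r : ℚ, a = (r : ℝ)) ∧ (∃ r : ℚ, t₁ ^ 2 = (r : ℝ)) ∧
      (∃ r : ℚ, t₂ ^ 2 = (r : ℝ)) ∧ (∃ r : ℚ, b ^ 2 = (r : ℝ)) := by
  obtain ⟨r1, e1⟩ := h1
  obtain ⟨r2, e2⟩ := h2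
  obtain ⟨r3, e3⟩ := h3
  obtain ⟨r4, e4⟩ := h4
  have hb0 : b ≠ 0 := ne_of_gt hb
  have hd : t₁ - t₂ ≠ 0 := sub_ne_zero.mpr hne
  have h31 : ((r3 : ℝ)) - r1 = b * (t₁ - t₂) := by rw [← e1, ← e3]; ring
  have h42 : ((r4 : ℝ)) - r2 = b * (t₁ - t₂) / (t₁ * t₂) := by
    rw [← e2, ← e4]; field_simp; ring
  have h42ne : ((r4 : ℝ)) - r2 ≠ 0 := by
    rw [h42]
    exact div_ne_zero (mul_ne_zero hb0 hd) (mul_ne_zero ht₁ ht₂)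
  have h42neQ : r4 - r2 ≠ 0 := by
    intro h
    apply h42ne
    have : ((r4 - r2 : ℚ) : ℝ) = 0 := by rw [h]; norm_num
    push_cast at this; linarith
  set S : ℚ := (r3 - r1) / (r4 - r2) with hSdef
  have hS : (S : ℝ) = t₁ * t₂ := by
    rw [hSdef]
    push_cast
    rw [div_eq_iff h42ne, h31, h42]
    field_simp
  have hS1 : t₁ * t₂ + 1 ≠ 0 := by
    intro h; apply hprod; linarith
  have hSQ1 : S + 1 ≠ 0 := by
    intro h
    apply hS1
    have : ((S + 1 : ℚ) : ℝ) = 0 := by rw [h]; norm_num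
    push_cast at this; rw [hS] at this; linarith
  set U : ℚ := ((r2 - r1) + (r4 - r3)) * S / (S + 1) with hUdef
  have hU : (U : ℝ) = b * (t₁ + t₂) := by
    have hsum : ((r2 : ℝ) - r1) + ((r4 : ℝ) - r3) = b * (t₁ + t₂) * (t₁ * t₂ + 1) / (t₁ * t₂) := by
      rw [← e1, ← e2, ← e3, ← e4]; field_simp; ring
    rw [hUdef]
    push_cast
    rw [hS, hsum]
    have hS1' : ((S : ℝ) + 1) ≠ 0 := by rw [hS]; exact hS1
    field_simp
  -- b * t₁ and b * t₂ are rational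
  have hbt1 : ((U + (r3 - r1)) / 2 : ℚ) = (b * t₁ : ℝ) := by
    push_cast; rw [hU, h31]; ring
  have hbt2 : ((U - (r3 - r1)) / 2 : ℚ) = (b * t₂ : ℝ) := by
    push_cast; rw [hU, h31]; ring
  set B1 : ℚ := (U + (r3 - r1)) / 2
  set B2 : ℚ := (U - (r3 - r1)) / 2
  have ha : a = ((r1 + B1 : ℚ) : ℝ) := by
    push_cast; rw [hbt1]; linarith
  -- b / t₁ rational
  have hdt1 : ((r2 - (r1 + B1) : ℚ) : ℝ) = b / t₁ := by
    push_cast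
    have := ha
    push_cast at this
    rw [← e2]; linarith
  have hdt2 : ((r4 - (r1 + B1) : ℚ) : ℝ) = b / t₂ := by
    push_cast
    have := ha
    push_cast at this
    rw [← e4]; linarith
  have hdt1ne : b / t₁ ≠ 0 := div_ne_zero hb0 ht₁
  have hdt2ne : b / t₂ ≠ 0 := div_ne_zero hb0 ht₂
  refine ⟨⟨r1 + B1, ha⟩, ⟨B1 / (r2 - (r1 + B1)), ?_⟩, ⟨B2 / (r4 - (r1 + B1)), ?_⟩,
    ⟨B1 * (r2 - (r1 + B1)), ?_⟩⟩
  · rw [Rat.cast_div, hbt1, hdt1]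
    field_simp
  · rw [Rat.cast_div, hbt2, hdt2]
    field_simp
  · rw [Rat.cast_mul, hbt1, hdt1]
    field_simp
end

section
/- Let τ = a + bi with b > 0, and suppose the lattice Γ_τ = span_ℤ{(1,0),(a,b)} ⊂ ℝ² contains two nonzero orthogonal vectors of the form A·(a,b) + B·(1,0) and C·(a,b) + D·(1,0) with A,B,C,D ∈ ℤ and AD − BC ≠ 0. Then (a²+b²)·AC + a·(AD+BC) + B·D = 0; consequently either a is rational (when AC = 0), or the point (a,b) lies on the circle centered at (−(AD+BC)/(2AC), 0) of radius |AD−BC|/(2|AC|), i.e. on a semicircle orthogonal to the real axis with rational center and rational radius, meeting the real line at two rational points. -/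
theorem stmt14 (a b : ℝ) (hb : 0 < b) (A B C D : ℤ)
    (hdet : A * D - B * C ≠ 0)
    (horth : ((A : ℝ) * a + (B : ℝ)) * ((C : ℝ) * a + (D : ℝ)) +
      ((A : ℝ) * b) * ((C : ℝ) * b) = 0) :
    ((a ^ 2 + b ^ 2) * ((A : ℝ) * (C : ℝ)) +
        a * ((A : ℝ) * (D : ℝ) + (B : ℝ) * (C : ℝ)) + (B : ℝ) * (D : ℝ) = 0) ∧
    (A * C = 0 → ∃ r : ℚ, a = (r : ℝ)) ∧
    (A * C ≠ 0 →
      (a + ((A : ℝ) * (D : ℝ) + (B : ℝ) * (C : ℝ)) / (2 * (A : ℝ) * (C : ℝ))) ^ 2 +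
          b ^ 2 =
        ((A : ℝ) * (D : ℝ) - (B : ℝ) * (C : ℝ)) ^ 2 / (4 * ((A : ℝ) * (C : ℝ)) ^ 2)) := by
  have h1 : (a ^ 2 + b ^ 2) * ((A : ℝ) * (C : ℝ)) +
      a * ((A : ℝ) * (D : ℝ) + (B : ℝ) * (C : ℝ)) + (B : ℝ) * (D : ℝ) = 0 := by
    linear_combination horth
  refine ⟨h1, ?_, ?_⟩
  · intro hAC
    rcases mul_eq_zero.mp hAC with hA | hC
    · have hB : B ≠ 0 := by rintro rfl; simp [hA] at hdet
      have hC : C ≠ 0 := by rintro rfl; simp [hA] at hdet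
      refine ⟨-D / C, ?_⟩
      have hCr : (C : ℝ) ≠ 0 := Int.cast_ne_zero.mpr hC
      have hBr : (B : ℝ) ≠ 0 := Int.cast_ne_zero.mpr hB
      have : (B : ℝ) * ((C : ℝ) * a + (D : ℝ)) = 0 := by
        have hAr : (A : ℝ) = 0 := by exact_mod_cast congrArg Int.cast hA
        linear_combination horth - a * ((C : ℝ) * a + (D : ℝ)) * hAr - b * (C:ℝ) * b * hAr
      have h2 : (C : ℝ) * a + (D : ℝ) = 0 := by
        rcases mul_eq_zero.mp this with h | h
        · exact absurd h hBr
        · exact h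
      push_cast
      field_simp
      linarith
    · have hD : D ≠ 0 := by rintro rfl; simp [hC] at hdet
      have hA : A ≠ 0 := by rintro rfl; simp [hC] at hdet
      refine ⟨-B / A, ?_⟩
      have hAr : (A : ℝ) ≠ 0 := Int.cast_ne_zero.mpr hA
      have hDr : (D : ℝ) ≠ 0 := Int.cast_ne_zero.mpr hD
      have : ((A : ℝ) * a + (B : ℝ)) * (D : ℝ) = 0 := by
        have hCr : (C : ℝ) = 0 := by exact_mod_cast congrArg Int.cast hC
        linear_combination horth - ((A:ℝ) * a + (B:ℝ)) * a * hCr - (A:ℝ) * b * b * hCr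
      have h2 : (A : ℝ) * a + (B : ℝ) = 0 := by
        rcases mul_eq_zero.mp this with h | h
        · exact h
        · exact absurd h hDr
      push_cast
      field_simp
      linarith
  · intro hAC
    have hACr : (A : ℝ) * (C : ℝ) ≠ 0 := by
      rw [← Int.cast_mul]; exact_mod_cast hAC
    have hA : (A:ℝ) ≠ 0 := fun h => hACr (by rw [h]; ring)
    have hC : (C:ℝ) ≠ 0 := fun h => hACr (by rw [h]; ring)
    field_simp
    linear_combination (16*(A:ℝ)*(C:ℝ)) * h1
end
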